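/- arXiv:2603.02824 — 4 statements merged into one kernel-verified Lean document; each statement's English description precedes it below -/
import Mathlib

section
/- Let H be a graph on n ≥ 2 vertices whose girth is not 3 (possibly infinite), and let G = W(H). Then MF^{n−1}(G) is pure, and a set of the form V(G) \ {u,v} is a facet of MF^{n−1}(G) if and only if one of the following holds: (1) u,v ∈ V(H) with u ≠ v; (2) {u,v} = {y_i,y_j} with {x_i,x_j} ∉ E(H); (3) {u,v} = {x_i,y_j} with i ≠ j. -/
variable {V : Type*}

/-- `M` is a set of pairwise disjoint edges of `G` with all endpoints in `F`. -/
def IsMatchingOn (G : SimpleGraph V) (F : Finset V) (M : Finset (Sym2 V)) : Prop :=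
  (∀ e ∈ M, e ∈ G.edgeSet) ∧
  (∀ e ∈ M, ∀ v ∈ e, v ∈ F) ∧
  (∀ e ∈ M, ∀ e' ∈ M, e ≠ e' → ∀ v ∈ e, v ∉ e')

/-- `F` is a face of the `q`-matching-free complex `MF^q(G)`. -/
def MFFace (G : SimpleGraph V) (q : ℕ) (F : Finset V) : Prop :=
  ¬ ∃ M : Finset (Sym2 V), IsMatchingOn G F M ∧ M.card = q

/-- `F` is a facet (maximal face) of the complex with face predicate `faces`. -/
def IsFacet (faces : Finset V → Prop) (F : Finset V) : Prop :=
  faces F ∧ ∀ F', faces F' → F ⊆ F' → F = F'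

/-- Even-connection of `u` and `v` with respect to the pairwise disjoint edges in `M`. -/
def EvenConnected (G : SimpleGraph V) (M : Finset (Sym2 V)) (u v : V) : Prop :=
  ∃ (r : ℕ) (p : ℕ → V), 1 ≤ r ∧ p 0 = u ∧ p (2 * r + 1) = v ∧
    (∀ k, k ≤ 2 * r → G.Adj (p k) (p (k + 1))) ∧
    (∀ k, k < r → s(p (2 * k + 1), p (2 * k + 2)) ∈ M) ∧
    (∀ k l, k < r → l < r →
      s(p (2 * k + 1), p (2 * k + 2)) = s(p (2 * l + 1), p (2 * l + 2)) → k = l)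

/-- The set of vertices covered by the edges in `M`. -/
def mSupp (M : Finset (Sym2 V)) : Set V := {v | ∃ e ∈ M, v ∈ e}

/-- The even-connection graph `G^{e₁⋯e_q}` (vertices covered by `M` are isolated). -/
def evenConnGraph (G : SimpleGraph V) (M : Finset (Sym2 V)) : SimpleGraph V where
  Adj x y := x ≠ y ∧ x ∉ mSupp M ∧ y ∉ mSupp M ∧
    (G.Adj x y ∨ EvenConnected G M x y ∨ EvenConnected G M y x)
  symm := by
    constructor
    rintro x y ⟨hne, hx, hy, h⟩
    refine ⟨hne.symm, hy, hx, ?_⟩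
    rcases h with h | h | h
    · exact Or.inl h.symm
    · exact Or.inr (Or.inr h)
    · exact Or.inr (Or.inl h)
  loopless := ⟨fun x h => h.1 rfl⟩

/-- Delete a set of vertices from a graph (keeping them as isolated vertices). -/
def delSet (G : SimpleGraph V) (S : Set V) : SimpleGraph V where
  Adj x y := G.Adj x y ∧ x ∉ S ∧ y ∉ S
  symm := ⟨fun x y ⟨h, hx, hy⟩ => ⟨h.symm, hy, hx⟩⟩
  loopless := ⟨fun x ⟨h, _, _⟩ => G.loopless.irrefl x h⟩

/-- The whisker graph `W(H)`: each vertex `x` (as `Sum.inl x`) gets a pendant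
whisker vertex `Sum.inr x`. -/
def whisker (H : SimpleGraph V) : SimpleGraph (V ⊕ V) where
  Adj x y :=
    (∃ a b, x = Sum.inl a ∧ y = Sum.inl b ∧ H.Adj a b) ∨
    (∃ a, (x = Sum.inl a ∧ y = Sum.inr a) ∨ (x = Sum.inr a ∧ y = Sum.inl a))
  symm := by
    constructor
    rintro x y (⟨a, b, hx, hy, hab⟩ | ⟨a, h | h⟩)
    · exact Or.inl ⟨b, a, hy, hx, hab.symm⟩
    · exact Or.inr ⟨a, Or.inr ⟨h.2, h.1⟩⟩
    · exact Or.inr ⟨a, Or.inl ⟨h.2, h.1⟩⟩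
  loopless := by
    constructor
    rintro x (⟨a, b, hx, hy, hab⟩ | ⟨a, ⟨h1, h2⟩ | ⟨h1, h2⟩⟩)
    · obtain rfl := Sum.inl_injective (hx ▸ hy : (Sum.inl a : V ⊕ V) = Sum.inl b)
      exact H.loopless.irrefl a hab
    · exact Sum.inl_ne_inr (h1 ▸ h2 : (Sum.inl a : V ⊕ V) = Sum.inr a)
    · exact Sum.inr_ne_inl (h1 ▸ h2 : (Sum.inr a : V ⊕ V) = Sum.inl a)

/-- Shellability of the complex with face predicate `faces`: there is a linear
order `F 0, F 1, …` of all facets such that each facet meets the union of the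
previous ones in a pure subcomplex of codimension one. -/
def Shellable (faces : Finset V → Prop) : Prop :=
  ∃ (t : ℕ) (F : Fin t → Finset V),
    (∀ i, IsFacet faces (F i)) ∧
    (∀ F', IsFacet faces F' → ∃ i, F' = F i) ∧
    Function.Injective F ∧
    ∀ k : Fin t, 0 < (k : ℕ) → ∀ σ : Finset V, σ ⊆ F k →
      (∃ i, i < k ∧ σ ⊆ F i) →
      ∃ τ : Finset V, σ ⊆ τ ∧ τ ⊆ F k ∧ (∃ i, i < k ∧ τ ⊆ F i) ∧
        τ.card = (F k).card - 1

/-- Vertex decomposability of the complex with face predicate `faces`. -/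
inductive VertexDecomposable [DecidableEq V] : (Finset V → Prop) → Prop
  | simplex (faces : Finset V → Prop) (F : Finset V)
      (h : ∀ F', faces F' ↔ F' ⊆ F) : VertexDecomposable faces
  | shed (faces : Finset V → Prop) (v : V)
      (hdel : VertexDecomposable (fun F => faces F ∧ v ∉ F))
      (hlink : VertexDecomposable (fun F => v ∉ F ∧ faces (insert v F)))
      (hshed : ∀ F, v ∉ F → faces (insert v F) →
        ¬ IsFacet (fun F' => faces F' ∧ v ∉ F') F) :
      VertexDecomposable faces

section AuxMF
set_option linter.unusedSectionVars false
set_option maxHeartbeats 1000000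

open Finset

lemma girth_eq_three_aux {V' : Type*} {H : SimpleGraph V'} {a b c : V'}
    (hab : H.Adj a b) (hbc : H.Adj b c) (hca : H.Adj c a) : H.girth = 3 := by
  have hab' : a ≠ b := hab.ne
  have hbc' : b ≠ c := hbc.ne
  have hca' : c ≠ a := hca.ne
  have h1 := hab'.symm; have h2 := hbc'.symm; have h3' := hca'.symm
  set w : H.Walk a a := .cons hab (.cons hbc (.cons hca .nil)) with hw
  have hcyc : w.IsCycle := by
    rw [SimpleGraph.Walk.isCycle_def]
    refine ⟨?_, by simp [hw], ?_⟩
    · rw [SimpleGraph.Walk.isTrail_def]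
      simp only [hw, SimpleGraph.Walk.edges_cons, SimpleGraph.Walk.edges_nil,
        List.nodup_cons, List.mem_cons, List.not_mem_nil, or_false, List.mem_singleton,
        List.nodup_nil, and_true, Sym2.eq_iff]
      tauto
    · simp only [hw, SimpleGraph.Walk.support_cons, SimpleGraph.Walk.support_nil,
        List.tail_cons, List.nodup_cons, List.mem_cons, List.not_mem_nil, or_false,
        List.mem_singleton, List.nodup_nil, and_true]
      tauto
  have h3 : H.egirth ≤ 3 := by
    have : H.egirth ≤ (w.length : ℕ∞) := by
      rw [SimpleGraph.egirth]
      exact iInf_le_of_le a (iInf_le_of_le w (iInf_le_of_le hcyc le_rfl))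
    simpa [hw] using this
  have hge := SimpleGraph.three_le_egirth (G := H)
  have : H.egirth = 3 := le_antisymm h3 hge
  rw [SimpleGraph.girth, this]
  rfl

variable [Fintype V] [DecidableEq V] {H : SimpleGraph V}

lemma whisker_edge_cases {e : Sym2 (V ⊕ V)} (he : e ∈ (whisker H).edgeSet) :
    (∃ a b : V, H.Adj a b ∧ e = s(Sum.inl a, Sum.inl b)) ∨
    (∃ a : V, e = s(Sum.inl a, Sum.inr a)) := by
  induction e using Sym2.ind with
  | _ x y =>
    rw [SimpleGraph.mem_edgeSet] at he
    rcases he with ⟨a, b, rfl, rfl, hab⟩ | ⟨a, ⟨rfl, rfl⟩ | ⟨rfl, rfl⟩⟩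
    · exact Or.inl ⟨a, b, hab, rfl⟩
    · exact Or.inr ⟨a, rfl⟩
    · exact Or.inr ⟨a, Sym2.eq_swap⟩

lemma exists_matching_of_pairs (H : SimpleGraph V) (S : Finset (V ⊕ V)) (T : Finset V)
    (hT : ∀ i ∈ T, (Sum.inl i : V ⊕ V) ∈ S ∧ (Sum.inr i : V ⊕ V) ∈ S) :
    ∃ M, IsMatchingOn (whisker H) S M ∧ M.card = T.card := by
  refine ⟨T.image (fun i => s(Sum.inl i, Sum.inr i)), ⟨?_, ?_, ?_⟩, ?_⟩
  · rintro e he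
    obtain ⟨i, hi, rfl⟩ := Finset.mem_image.1 he
    rw [SimpleGraph.mem_edgeSet]
    exact Or.inr ⟨i, Or.inl ⟨rfl, rfl⟩⟩
  · rintro e he v hv
    obtain ⟨i, hi, rfl⟩ := Finset.mem_image.1 he
    rcases Sym2.mem_iff.1 hv with rfl | rfl
    · exact (hT i hi).1
    · exact (hT i hi).2
  · rintro e he e' he' hne v hv hv'
    obtain ⟨i, hi, rfl⟩ := Finset.mem_image.1 he
    obtain ⟨j, hj, rfl⟩ := Finset.mem_image.1 he'
    have hij : i ≠ j := fun h => hne (by rw [h])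
    rcases Sym2.mem_iff.1 hv with rfl | rfl <;>
      rcases Sym2.mem_iff.1 hv' with h | h <;> simp_all
  · rw [Finset.card_image_of_injective]
    intro i j h
    simpa using h

lemma exists_matching_of_pairs_plus (H : SimpleGraph V) (S : Finset (V ⊕ V)) (T : Finset V)
    (hT : ∀ i ∈ T, (Sum.inl i : V ⊕ V) ∈ S ∧ (Sum.inr i : V ⊕ V) ∈ S)
    (p q : V) (hpq : H.Adj p q) (hp : (Sum.inl p : V ⊕ V) ∈ S) (hq : (Sum.inl q : V ⊕ V) ∈ S)
    (hpT : p ∉ T) (hqT : q ∉ T) :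
    ∃ M, IsMatchingOn (whisker H) S M ∧ M.card = T.card + 1 := by
  classical
  refine ⟨insert s(Sum.inl p, Sum.inl q) (T.image (fun i => s(Sum.inl i, Sum.inr i))),
    ⟨?_, ?_, ?_⟩, ?_⟩
  · rintro e he
    rcases Finset.mem_insert.1 he with rfl | he
    · rw [SimpleGraph.mem_edgeSet]; exact Or.inl ⟨p, q, rfl, rfl, hpq⟩
    · obtain ⟨i, hi, rfl⟩ := Finset.mem_image.1 he
      rw [SimpleGraph.mem_edgeSet]
      exact Or.inr ⟨i, Or.inl ⟨rfl, rfl⟩⟩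
  · rintro e he v hv
    rcases Finset.mem_insert.1 he with rfl | he
    · rcases Sym2.mem_iff.1 hv with rfl | rfl
      · exact hp
      · exact hq
    · obtain ⟨i, hi, rfl⟩ := Finset.mem_image.1 he
      rcases Sym2.mem_iff.1 hv with rfl | rfl
      · exact (hT i hi).1
      · exact (hT i hi).2
  · rintro e he e' he' hne v hv hv'
    rcases Finset.mem_insert.1 he with rfl | he <;> rcases Finset.mem_insert.1 he' with rfl | he'
    · exact hne rfl
    · obtain ⟨i, hi, rfl⟩ := Finset.mem_image.1 he'
      rcases Sym2.mem_iff.1 hv with rfl | rfl <;>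
        rcases Sym2.mem_iff.1 hv' with h | h <;> simp_all
    · obtain ⟨i, hi, rfl⟩ := Finset.mem_image.1 he
      rcases Sym2.mem_iff.1 hv with rfl | rfl <;>
        rcases Sym2.mem_iff.1 hv' with h | h <;> simp_all
    · obtain ⟨i, hi, rfl⟩ := Finset.mem_image.1 he
      obtain ⟨j, hj, rfl⟩ := Finset.mem_image.1 he'
      have hij : i ≠ j := fun h => hne (by rw [h])
      rcases Sym2.mem_iff.1 hv with rfl | rfl <;>
        rcases Sym2.mem_iff.1 hv' with h | h <;> simp_all
  · rw [Finset.card_insert_of_notMem, Finset.card_image_of_injective]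
    · intro i j h; simpa using h
    · intro hmem
      obtain ⟨i, hi, h⟩ := Finset.mem_image.1 hmem
      rw [Sym2.eq_iff] at h
      rcases h with ⟨h1, h2⟩ | ⟨h1, h2⟩ <;> simp_all

lemma matching_decomp (H : SimpleGraph V) (S : Finset (V ⊕ V)) (M : Finset (Sym2 (V ⊕ V)))
    (hM : IsMatchingOn (whisker H) S M) :
    ∃ (I : Finset V) (E : Finset (Sym2 V)),
      (∀ a ∈ I, (Sum.inl a : V ⊕ V) ∈ S ∧ (Sum.inr a : V ⊕ V) ∈ S) ∧
      (∀ e ∈ E, ∃ p q : V, p ≠ q ∧ H.Adj p q ∧ e = s(p, q) ∧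
        (Sum.inl p : V ⊕ V) ∈ S ∧ (Sum.inl q : V ⊕ V) ∈ S ∧ p ∉ I ∧ q ∉ I) ∧
      I.card + E.card = M.card ∧
      I.card + 2 * E.card ≤ (Finset.univ.filter fun a : V => (Sum.inl a : V ⊕ V) ∈ S).card := by
  obtain ⟨hedge, hsupp, hdisj⟩ := hM
  set I : Finset V := Finset.univ.filter (fun a : V => s(Sum.inl a, Sum.inr a) ∈ M) with hIdef
  have hImem : ∀ a : V, a ∈ I ↔ s(Sum.inl a, Sum.inr a) ∈ M := by
    intro a; simp [hIdef]
  set MH : Finset (Sym2 (V ⊕ V)) :=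
    M.filter (fun e => ¬ ∃ a : V, e = s(Sum.inl a, Sum.inr a)) with hMHdef
  have hMHM : ∀ e ∈ MH, e ∈ M := fun e he => (Finset.mem_filter.1 he).1
  have hMHshape : ∀ e ∈ MH, ∃ p q : V, H.Adj p q ∧ e = s(Sum.inl p, Sum.inl q) := by
    intro e he
    obtain ⟨heM, hne⟩ := Finset.mem_filter.1 he
    rcases whisker_edge_cases (hedge e heM) with ⟨p, q, hpq, rfl⟩ | hW'
    · exact ⟨p, q, hpq, rfl⟩
    · exact absurd hW' hne
  set f : Sym2 (V ⊕ V) → Sym2 V := Sym2.map (Sum.elim id id) with hf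
  set E : Finset (Sym2 V) := MH.image f with hEdef
  have hnotI : ∀ e ∈ MH, ∀ r : V, (Sum.inl r : V ⊕ V) ∈ e → r ∉ I := by
    intro e he r hr hrI
    have hrM := (hImem r).1 hrI
    have hne : e ≠ s(Sum.inl r, Sum.inr r) := by
      rintro rfl
      exact (Finset.mem_filter.1 he).2 ⟨r, rfl⟩
    exact hdisj e (hMHM e he) _ hrM hne _ hr (Sym2.mem_mk_left _ _)
  have hEprop : ∀ e' ∈ E, ∃ p q : V, p ≠ q ∧ H.Adj p q ∧ e' = s(p, q) ∧
      (Sum.inl p : V ⊕ V) ∈ S ∧ (Sum.inl q : V ⊕ V) ∈ S ∧ p ∉ I ∧ q ∉ I := by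
    intro e' he'
    obtain ⟨e, he, rfl⟩ := Finset.mem_image.1 he'
    obtain ⟨p, q, hpq, rfl⟩ := hMHshape e he
    refine ⟨p, q, hpq.ne, hpq, by simp [hf], ?_, ?_, ?_, ?_⟩
    · exact hsupp _ (hMHM _ he) _ (Sym2.mem_mk_left _ _)
    · exact hsupp _ (hMHM _ he) _ (Sym2.mem_mk_right _ _)
    · exact hnotI _ he p (Sym2.mem_mk_left _ _)
    · exact hnotI _ he q (Sym2.mem_mk_right _ _)
  have hIprop : ∀ a ∈ I, (Sum.inl a : V ⊕ V) ∈ S ∧ (Sum.inr a : V ⊕ V) ∈ S := by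
    intro a ha
    have haM := (hImem a).1 ha
    exact ⟨hsupp _ haM _ (Sym2.mem_mk_left _ _), hsupp _ haM _ (Sym2.mem_mk_right _ _)⟩
  have hWeq : M.filter (fun e => ∃ a : V, e = s(Sum.inl a, Sum.inr a)) =
      I.image (fun a => s(Sum.inl a, Sum.inr a)) := by
    ext e
    simp only [Finset.mem_filter, Finset.mem_image, hImem]
    constructor
    · rintro ⟨heM, a, rfl⟩; exact ⟨a, heM, rfl⟩
    · rintro ⟨a, haM, rfl⟩; exact ⟨haM, a, rfl⟩
  have hWcard : (M.filter (fun e => ∃ a : V, e = s(Sum.inl a, Sum.inr a))).card = I.card := by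
    rw [hWeq]
    apply Finset.card_image_of_injective
    intro i j h
    simpa using h
  have hEcard : E.card = MH.card := by
    apply Finset.card_image_of_injOn
    intro e he e' he' h
    by_contra hne
    obtain ⟨p, q, hpq, hesh⟩ := hMHshape e he
    obtain ⟨p', q', hpq', hesh'⟩ := hMHshape e' he'
    have hfe : f e = s(p, q) := by rw [hesh]; simp [hf]
    have hfe' : f e' = s(p', q') := by rw [hesh']; simp [hf]
    have heq : s(p, q) = s(p', q') := by rw [← hfe, ← hfe', h]
    have hp' : (Sum.inl p' : V ⊕ V) ∈ e := by
      rw [hesh]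
      rw [Sym2.eq_iff] at heq
      rcases heq with ⟨rfl, rfl⟩ | ⟨rfl, rfl⟩
      · exact Sym2.mem_mk_left _ _
      · exact Sym2.mem_mk_right _ _
    exact hdisj e (hMHM e he) e' (hMHM e' he') hne _ hp' (hesh' ▸ Sym2.mem_mk_left _ _)
  have hsumcard : I.card + E.card = M.card := by
    rw [hEcard, ← hWcard, hMHdef]
    exact Finset.card_filter_add_card_filter_not _
  refine ⟨I, E, hIprop, hEprop, hsumcard, ?_⟩
  classical
  set g : Sym2 V → Finset V := fun e' => Finset.univ.filter (· ∈ e') with hg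
  have hgpair : ∀ p q : V, g s(p, q) = {p, q} := by
    intro p q; ext x; simp [hg, Sym2.mem_iff]
  have hgcard : ∀ e' ∈ E, (g e').card = 2 := by
    intro e' he'
    obtain ⟨p, q, hpq, _, rfl, _⟩ := hEprop e' he'
    rw [hgpair, Finset.card_pair hpq]
  have hmemg : ∀ e' ∈ E, ∀ x ∈ g e',
      ∃ e ∈ MH, f e = e' ∧ (Sum.inl x : V ⊕ V) ∈ e := by
    intro e' he' x hx
    obtain ⟨e, he, rfl⟩ := Finset.mem_image.1 he'
    obtain ⟨p, q, hpq, hesh⟩ := hMHshape e he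
    refine ⟨e, he, rfl, ?_⟩
    have hfe : f e = s(p, q) := by rw [hesh]; simp [hf]
    have hx' : x ∈ (s(p,q) : Sym2 V) := by
      have hx2 := hx
      rw [hfe, hgpair] at hx2
      rcases Finset.mem_insert.1 hx2 with rfl | hx3
      · exact Sym2.mem_mk_left _ _
      · rw [Finset.mem_singleton] at hx3; subst hx3; exact Sym2.mem_mk_right _ _
    rw [hesh]
    rcases Sym2.mem_iff.1 hx' with rfl | rfl
    · exact Sym2.mem_mk_left _ _
    · exact Sym2.mem_mk_right _ _
  have hpair : (E : Set (Sym2 V)).PairwiseDisjoint g := by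
    intro e1 he1 e2 he2 hne
    simp only [Function.onFun, Finset.disjoint_left]
    intro x hx1 hx2
    obtain ⟨m1, hm1, hf1, hxm1⟩ := hmemg e1 he1 x hx1
    obtain ⟨m2, hm2, hf2, hxm2⟩ := hmemg e2 he2 x hx2
    have hm12 : m1 ≠ m2 := by
      intro h; exact hne (by rw [← hf1, ← hf2, h])
    exact hdisj m1 (hMHM m1 hm1) m2 (hMHM m2 hm2) hm12 _ hxm1 hxm2
  have hbu : (E.biUnion g).card = 2 * E.card := by
    rw [Finset.card_biUnion hpair, Finset.sum_congr rfl hgcard]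
    simp [mul_comm]
  have hdisjIB : Disjoint I (E.biUnion g) := by
    rw [Finset.disjoint_left]
    intro a haI hab
    obtain ⟨e', he', hag⟩ := Finset.mem_biUnion.1 hab
    obtain ⟨m, hm, hfm, ham⟩ := hmemg e' he' a hag
    exact hnotI m hm a ham haI
  have hsub : I ∪ (E.biUnion g) ⊆
      Finset.univ.filter (fun a : V => (Sum.inl a : V ⊕ V) ∈ S) := by
    intro a ha
    rcases Finset.mem_union.1 ha with ha | ha
    · exact Finset.mem_filter.2 ⟨Finset.mem_univ _, (hIprop a ha).1⟩
    · obtain ⟨e', he', hag⟩ := Finset.mem_biUnion.1 ha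
      obtain ⟨m, hm, hfm, ham⟩ := hmemg e' he' a hag
      exact Finset.mem_filter.2 ⟨Finset.mem_univ _, hsupp m (hMHM m hm) _ ham⟩
  calc I.card + 2 * E.card = (I ∪ E.biUnion g).card := by
        rw [Finset.card_union_of_disjoint hdisjIB, hbu]
    _ ≤ _ := Finset.card_le_card hsub

lemma nonface_of_pairs (H : SimpleGraph V) (S : Finset (V ⊕ V)) (q : ℕ)
    (h : q ≤ (Finset.univ.filter fun i : V =>
        (Sum.inl i : V ⊕ V) ∈ S ∧ (Sum.inr i : V ⊕ V) ∈ S).card) :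
    ¬ MFFace (whisker H) q S := by
  obtain ⟨T, hTsub, hTcard⟩ := Finset.exists_subset_card_eq h
  obtain ⟨M, hM, hc⟩ := exists_matching_of_pairs H S T
    (fun i hi => (Finset.mem_filter.1 (hTsub hi)).2)
  intro hface
  exact hface ⟨M, hM, by rw [hc, hTcard]⟩

lemma nonface_sup (H : SimpleGraph V) {n : ℕ} (hn : Fintype.card V = n)
    (w : V ⊕ V) (S : Finset (V ⊕ V)) (hsub : Finset.univ \ {w} ⊆ S) :
    ¬ MFFace (whisker H) (n - 1) S := by
  obtain ⟨a, ha⟩ : ∃ a : V, w = Sum.inl a ∨ w = Sum.inr a := by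
    cases w with
    | inl a => exact ⟨a, Or.inl rfl⟩
    | inr a => exact ⟨a, Or.inr rfl⟩
  have hT : ∀ i ∈ Finset.univ.erase a,
      (Sum.inl i : V ⊕ V) ∈ S ∧ (Sum.inr i : V ⊕ V) ∈ S := by
    intro i hi
    have hia : i ≠ a := Finset.ne_of_mem_erase hi
    constructor <;> refine hsub (Finset.mem_sdiff.2 ⟨Finset.mem_univ _, ?_⟩) <;>
      · rw [Finset.mem_singleton]
        rcases ha with rfl | rfl <;> simp [hia]
  obtain ⟨M, hM, hc⟩ := exists_matching_of_pairs H S _ hT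
  intro hface
  refine hface ⟨M, hM, ?_⟩
  rw [hc, Finset.card_erase_of_mem (Finset.mem_univ _), Finset.card_univ, hn]

lemma facet_max (H : SimpleGraph V) {n : ℕ} (hn : Fintype.card V = n)
    (u v : V ⊕ V) (huv : u ≠ v) :
    ∀ F', MFFace (whisker H) (n - 1) F' → Finset.univ \ {u, v} ⊆ F' →
      Finset.univ \ {u, v} = F' := by
  intro F' hF' hsub
  by_contra hne
  obtain ⟨w, hw1, hw2⟩ := Finset.exists_of_ssubset (lt_of_le_of_ne hsub hne)
  have hw : w ∈ ({u, v} : Finset (V ⊕ V)) := by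
    by_contra h
    exact hw2 (Finset.mem_sdiff.2 ⟨Finset.mem_univ _, h⟩)
  rcases Finset.mem_insert.1 hw with rfl | hwv
  · refine nonface_sup H hn v F' ?_ hF'
    intro x hx
    rw [Finset.mem_sdiff, Finset.mem_singleton] at hx
    by_cases hxw : x = w
    · exact hxw ▸ hw1
    · refine hsub (Finset.mem_sdiff.2 ⟨Finset.mem_univ _, ?_⟩)
      rw [Finset.mem_insert, Finset.mem_singleton]
      push_neg
      exact ⟨hxw, hx.2⟩
  · rw [Finset.mem_singleton] at hwv
    subst hwv
    refine nonface_sup H hn u F' ?_ hF'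
    intro x hx
    rw [Finset.mem_sdiff, Finset.mem_singleton] at hx
    by_cases hxw : x = w
    · exact hxw ▸ hw1
    · refine hsub (Finset.mem_sdiff.2 ⟨Finset.mem_univ _, ?_⟩)
      rw [Finset.mem_insert, Finset.mem_singleton]
      push_neg
      exact ⟨hx.2, hxw⟩

lemma card_filter_ne2 {n : ℕ} (hn : Fintype.card V = n) (a b : V) (hab : a ≠ b) :
    (Finset.univ.filter fun k : V => k ≠ a ∧ k ≠ b).card = n - 2 := by
  have h : (Finset.univ.filter fun k : V => k ≠ a ∧ k ≠ b) = Finset.univ \ {a, b} := by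
    ext k; simp [not_or]
  rw [h, Finset.card_sdiff_of_subset (Finset.subset_univ _), Finset.card_univ, hn,
    Finset.card_pair hab]

lemma card_filter_ne1 {n : ℕ} (hn : Fintype.card V = n) (a : V) :
    (Finset.univ.filter fun k : V => k ≠ a).card = n - 1 := by
  have h : (Finset.univ.filter fun k : V => k ≠ a) = Finset.univ \ {a} := by
    ext k; simp
  rw [h, Finset.card_sdiff_of_subset (Finset.subset_univ _), Finset.card_univ, hn,
    Finset.card_singleton]

lemma faceA (H : SimpleGraph V) {n : ℕ} (hn : Fintype.card V = n) (hn2 : 2 ≤ n)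
    (a b : V) (hab : a ≠ b) :
    MFFace (whisker H) (n - 1) (Finset.univ \ {Sum.inl a, Sum.inl b}) := by
  rintro ⟨M, hM, hc⟩
  obtain ⟨I, E, hI, hE, hsum, hle⟩ := matching_decomp H _ M hM
  have hfilt : (Finset.univ.filter fun k : V =>
      (Sum.inl k : V ⊕ V) ∈ Finset.univ \ ({Sum.inl a, Sum.inl b} : Finset (V ⊕ V))) =
      Finset.univ.filter fun k : V => k ≠ a ∧ k ≠ b := by
    ext k; simp [not_or]
  rw [hfilt, card_filter_ne2 hn a b hab] at hle
  rw [hc] at hsum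
  omega

lemma faceC (H : SimpleGraph V) {n : ℕ} (hn : Fintype.card V = n) (hn2 : 2 ≤ n)
    (a b : V) (hab : a ≠ b) :
    MFFace (whisker H) (n - 1) (Finset.univ \ {Sum.inl a, Sum.inr b}) := by
  rintro ⟨M, hM, hc⟩
  obtain ⟨I, E, hI, hE, hsum, hle⟩ := matching_decomp H _ M hM
  have hfilt : (Finset.univ.filter fun k : V =>
      (Sum.inl k : V ⊕ V) ∈ Finset.univ \ ({Sum.inl a, Sum.inr b} : Finset (V ⊕ V))) =
      Finset.univ.filter fun k : V => k ≠ a := by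
    ext k; simp [not_or]
  rw [hfilt, card_filter_ne1 hn a] at hle
  have hIsub : I ⊆ Finset.univ.filter fun k : V => k ≠ a ∧ k ≠ b := by
    intro k hk
    obtain ⟨h1, h2⟩ := hI k hk
    rw [Finset.mem_sdiff, Finset.mem_insert, Finset.mem_singleton] at h1 h2
    refine Finset.mem_filter.2 ⟨Finset.mem_univ _, ?_, ?_⟩
    · rintro rfl; exact h1.2 (Or.inl rfl)
    · rintro rfl; exact h2.2 (Or.inr rfl)
  have hIcard := Finset.card_le_card hIsub
  rw [card_filter_ne2 hn a b hab] at hIcard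
  rw [hc] at hsum
  omega

lemma faceB (H : SimpleGraph V) {n : ℕ} (hn : Fintype.card V = n) (hn2 : 2 ≤ n)
    (a b : V) (hab : a ≠ b) (hnadj : ¬ H.Adj a b) :
    MFFace (whisker H) (n - 1) (Finset.univ \ {Sum.inr a, Sum.inr b}) := by
  rintro ⟨M, hM, hc⟩
  obtain ⟨I, E, hI, hE, hsum, hle⟩ := matching_decomp H _ M hM
  have hfilt : (Finset.univ.filter fun k : V =>
      (Sum.inl k : V ⊕ V) ∈ Finset.univ \ ({Sum.inr a, Sum.inr b} : Finset (V ⊕ V))) =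
      Finset.univ := by
    ext k; simp
  rw [hfilt, Finset.card_univ, hn] at hle
  have hIsub : I ⊆ Finset.univ.filter fun k : V => k ≠ a ∧ k ≠ b := by
    intro k hk
    obtain ⟨h1, h2⟩ := hI k hk
    rw [Finset.mem_sdiff, Finset.mem_insert, Finset.mem_singleton] at h2
    refine Finset.mem_filter.2 ⟨Finset.mem_univ _, ?_, ?_⟩
    · rintro rfl; exact h2.2 (Or.inl rfl)
    · rintro rfl; exact h2.2 (Or.inr rfl)
  have hIcard := Finset.card_le_card hIsub
  rw [card_filter_ne2 hn a b hab] at hIcard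
  rw [hc] at hsum
  have hE1 : 0 < E.card := by omega
  have hI2 : I.card = n - 2 := by omega
  have hIeq : I = Finset.univ.filter fun k : V => k ≠ a ∧ k ≠ b :=
    Finset.eq_of_subset_of_card_le hIsub (by rw [card_filter_ne2 hn a b hab, hI2])
  obtain ⟨e, he⟩ := Finset.card_pos.1 hE1
  obtain ⟨p, q, hpq, hadj, hesh, _, _, hpI, hqI⟩ := hE e he
  have hpab : p = a ∨ p = b := by
    by_contra h
    push_neg at h
    exact hpI (hIeq ▸ Finset.mem_filter.2 ⟨Finset.mem_univ _, h.1, h.2⟩)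
  have hqab : q = a ∨ q = b := by
    by_contra h
    push_neg at h
    exact hqI (hIeq ▸ Finset.mem_filter.2 ⟨Finset.mem_univ _, h.1, h.2⟩)
  rcases hpab with rfl | rfl <;> rcases hqab with rfl | rfl
  · exact hpq rfl
  · exact hnadj hadj
  · exact hnadj hadj.symm
  · exact hpq rfl

end AuxMF

/-- if `H` has `n ≥ 2` vertices and girth ≠ 3, then `MF^{n-1}(W(H))`
is pure (every facet has cardinality `2n - 2`), and `V(G) \ {u,v}` is a facet iff
(1) both `u, v` lie in `V(H)`, or (2) `u, v` are whisker vertices `y_i, y_j` with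
`{x_i, x_j} ∉ E(H)`, or (3) `{u,v} = {x_i, y_j}` with `i ≠ j`. -/
theorem facets_of_top_minus_one_mfComplex
    {V : Type*} [Fintype V] [DecidableEq V] (H : SimpleGraph V)
    (n : ℕ) (hn : Fintype.card V = n) (hn2 : 2 ≤ n)
    (hgirth : H.girth ≠ 3) :
    (∀ F : Finset (V ⊕ V), IsFacet (MFFace (whisker H) (n - 1)) F →
      F.card = 2 * n - 2) ∧
    (∀ u v : V ⊕ V, u ≠ v →
      (IsFacet (MFFace (whisker H) (n - 1)) (Finset.univ \ {u, v}) ↔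
        (∃ a b : V, u = Sum.inl a ∧ v = Sum.inl b) ∨
        (∃ a b : V, u = Sum.inr a ∧ v = Sum.inr b ∧ ¬ H.Adj a b) ∨
        (∃ a b : V, a ≠ b ∧
          ((u = Sum.inl a ∧ v = Sum.inr b) ∨ (u = Sum.inr b ∧ v = Sum.inl a))))) := by
  classical
  have hcard2 : Fintype.card (V ⊕ V) = 2 * n := by
    rw [Fintype.card_sum, hn]; ring
  constructor
  · -- purity
    rintro F ⟨hface, hmax⟩
    set D : Finset V := Finset.univ.filter (fun i => (Sum.inr i : V ⊕ V) ∉ F) with hDdef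
    set E : Finset V := Finset.univ.filter (fun j => (Sum.inl j : V ⊕ V) ∉ F) with hEdef
    have hDmem : ∀ i : V, i ∈ D ↔ (Sum.inr i : V ⊕ V) ∉ F := by intro i; simp [hDdef]
    have hEmem : ∀ j : V, j ∈ E ↔ (Sum.inl j : V ⊕ V) ∉ F := by intro j; simp [hEdef]
    have step1 : ∀ i : V, (Sum.inl i : V ⊕ V) ∈ F ∨ (Sum.inr i : V ⊕ V) ∈ F := by
      intro i
      by_contra hcon
      push_neg at hcon
      have hface' : MFFace (whisker H) (n - 1) (insert (Sum.inr i) F) := by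
        rintro ⟨M, hM, hc⟩
        refine hface ⟨M, ⟨hM.1, ?_, hM.2.2⟩, hc⟩
        intro e he v hv
        have hvF := hM.2.1 e he v hv
        rcases Finset.mem_insert.1 hvF with rfl | h
        · exfalso
          rcases whisker_edge_cases (hM.1 e he) with ⟨p, q, hpq, hesh⟩ | ⟨p, hesh⟩
          · rw [hesh] at hv
            rcases Sym2.mem_iff.1 hv with h | h <;> exact Sum.inr_ne_inl h
          · rw [hesh] at hv
            rcases Sym2.mem_iff.1 hv with h | h
            · exact Sum.inr_ne_inl h
            · obtain rfl := Sum.inr_injective h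
              have hli := hM.2.1 e he (Sum.inl i) (hesh ▸ Sym2.mem_mk_left _ _)
              rcases Finset.mem_insert.1 hli with h2 | h2
              · exact Sum.inl_ne_inr h2
              · exact hcon.1 h2
        · exact h
      have heq := hmax _ hface' (Finset.subset_insert _ _)
      exact hcon.2 (by rw [heq]; exact Finset.mem_insert_self _ _)
    have hDE : Disjoint D E := by
      rw [Finset.disjoint_left]
      intro i hiD hiE
      rcases step1 i with h | h
      · exact (hEmem i).1 hiE h
      · exact (hDmem i).1 hiD h
    have hcompl : Finset.univ \ F = E.image Sum.inl ∪ D.image Sum.inr := by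
      ext w
      cases w with
      | inl j =>
        simp only [Finset.mem_sdiff, Finset.mem_univ, true_and, Finset.mem_union,
          Finset.mem_image, hEmem, hDmem, Sum.inl.injEq, reduceCtorEq]
        constructor
        · intro h; exact Or.inl ⟨j, h, rfl⟩
        · rintro (⟨x, hx, rfl⟩ | ⟨x, hx, h⟩)
          · exact hx
          · exact absurd h (by simp)
      | inr i =>
        simp only [Finset.mem_sdiff, Finset.mem_univ, true_and, Finset.mem_union,
          Finset.mem_image, hEmem, hDmem, Sum.inr.injEq, reduceCtorEq]
        constructor
        · intro h; exact Or.inr ⟨i, h, rfl⟩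
        · rintro (⟨x, hx, h⟩ | ⟨x, hx, rfl⟩)
          · exact absurd h (by simp)
          · exact hx
    have hcardF : F.card + (D.card + E.card) = 2 * n := by
      have h1 : (Finset.univ \ F).card = 2 * n - F.card := by
        rw [Finset.card_sdiff_of_subset (Finset.subset_univ _), Finset.card_univ, hcard2]
      have hdisjimg : Disjoint (E.image (Sum.inl : V → V ⊕ V)) (D.image Sum.inr) := by
        rw [Finset.disjoint_left]
        rintro w hw1 hw2
        obtain ⟨x, _, rfl⟩ := Finset.mem_image.1 hw1
        obtain ⟨y, _, h⟩ := Finset.mem_image.1 hw2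
        exact Sum.inr_ne_inl h
      have h2 : (E.image (Sum.inl : V → V ⊕ V) ∪ D.image Sum.inr).card = E.card + D.card := by
        rw [Finset.card_union_of_disjoint hdisjimg,
          Finset.card_image_of_injective _ Sum.inl_injective,
          Finset.card_image_of_injective _ Sum.inr_injective]
      have hF2n : F.card ≤ 2 * n := by
        rw [← hcard2, ← Finset.card_univ]
        exact Finset.card_le_card (Finset.subset_univ _)
      rw [hcompl, h2] at h1
      omega
    suffices hDE2 : D.card + E.card = 2 by omega
    have hDEn : D.card + E.card ≤ n := by
      calc D.card + E.card = (D ∪ E).card := (Finset.card_union_of_disjoint hDE).symm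
        _ ≤ Fintype.card V := by rw [← Finset.card_univ]; exact Finset.card_le_card (Finset.subset_univ _)
        _ = n := hn
    have hlow : 2 ≤ D.card + E.card := by
      by_contra hl
      push_neg at hl
      refine absurd hface (nonface_of_pairs H F (n - 1) ?_)
      have hsub : Finset.univ \ (D ∪ E) ⊆ Finset.univ.filter
          (fun i : V => (Sum.inl i : V ⊕ V) ∈ F ∧ (Sum.inr i : V ⊕ V) ∈ F) := by
        intro i hi
        rw [Finset.mem_sdiff, Finset.mem_union] at hi
        push_neg at hi
        refine Finset.mem_filter.2 ⟨Finset.mem_univ _, ?_, ?_⟩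
        · by_contra h; exact hi.2.2 ((hEmem i).2 h)
        · by_contra h; exact hi.2.1 ((hDmem i).2 h)
      have hcards : n - (D.card + E.card) ≤ (Finset.univ \ (D ∪ E)).card := by
        rw [Finset.card_sdiff_of_subset (Finset.subset_univ _), Finset.card_univ, hn]
        have := Finset.card_union_le D E
        omega
      have := le_trans hcards (Finset.card_le_card hsub)
      omega
    have hadd : ∀ w : V ⊕ V, w ∉ F →
        ∃ M, IsMatchingOn (whisker H) (insert w F) M ∧ M.card = n - 1 := by
      intro w hw
      by_contra hc
      have heq := hmax _ hc (Finset.subset_insert _ _)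
      exact hw (by rw [heq]; exact Finset.mem_insert_self _ _)
    have hup : D.card + E.card ≤ 2 := by
      by_contra hgt
      push_neg at hgt
      have h3 : 3 ≤ D.card + E.card := hgt
      rcases D.eq_empty_or_nonempty with hD0 | hDne
      · -- D empty, E.card ≥ 3
        have hE3 : 3 ≤ E.card := by
          have : D.card = 0 := by rw [hD0]; rfl
          omega
        obtain ⟨j, hj⟩ := Finset.card_pos.1 (by omega : 0 < E.card)
        have hjF : (Sum.inl j : V ⊕ V) ∉ F := (hEmem j).1 hj
        obtain ⟨M, hM, hMc⟩ := hadd _ hjF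
        obtain ⟨I, Eh, hI, hEh, hsum, hle⟩ := matching_decomp H _ M hM
        rw [hMc] at hsum
        have hfe : (Finset.univ.filter fun k : V =>
            (Sum.inl k : V ⊕ V) ∈ insert (Sum.inl j) F) = Finset.univ \ E.erase j := by
          ext k
          simp only [Finset.mem_filter, Finset.mem_univ, true_and, Finset.mem_insert,
            Finset.mem_sdiff, Finset.mem_erase, hEmem, Sum.inl.injEq]
          tauto
        rw [hfe, Finset.card_sdiff_of_subset (Finset.subset_univ _), Finset.card_univ, hn,
          Finset.card_erase_of_mem hj] at hle
        have hEn : E.card ≤ n := by omega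
        omega
      · -- D nonempty
        have key : ∀ i ∈ D, D.card = 3 ∧
            ∃ p q : V, p ≠ q ∧ H.Adj p q ∧ p ∈ D.erase i ∧ q ∈ D.erase i := by
          intro i hiD
          have hiF : (Sum.inr i : V ⊕ V) ∉ F := (hDmem i).1 hiD
          obtain ⟨M, hM, hMc⟩ := hadd _ hiF
          obtain ⟨I, Eh, hI, hEh, hsum, hle⟩ := matching_decomp H _ M hM
          rw [hMc] at hsum
          have hfe : (Finset.univ.filter fun k : V =>
              (Sum.inl k : V ⊕ V) ∈ insert (Sum.inr i) F) = Finset.univ \ E := by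
            ext k
            simp only [Finset.mem_filter, Finset.mem_univ, true_and, Finset.mem_insert,
              Finset.mem_sdiff, hEmem, reduceCtorEq, false_or, not_not]
          rw [hfe, Finset.card_sdiff_of_subset (Finset.subset_univ _), Finset.card_univ, hn] at hle
          have hIsub : I ⊆ Finset.univ \ (D.erase i ∪ E) := by
            intro a haI
            obtain ⟨h1, h2⟩ := hI a haI
            have h1F : (Sum.inl a : V ⊕ V) ∈ F := by
              rcases Finset.mem_insert.1 h1 with h1' | h1'
              · exact absurd h1' (by simp)
              · exact h1'
            have haE : a ∉ E := fun h => (hEmem a).1 h h1F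
            refine Finset.mem_sdiff.2 ⟨Finset.mem_univ _, ?_⟩
            rw [Finset.mem_union]
            rintro (h' | h')
            · obtain ⟨hai, haD⟩ := Finset.mem_erase.1 h'
              rcases Finset.mem_insert.1 h2 with h2' | h2'
              · exact hai (Sum.inr_injective h2')
              · exact (hDmem a).1 haD h2'
            · exact haE h'
          have hcerase : (D.erase i ∪ E).card = D.card - 1 + E.card := by
            rw [Finset.card_union_of_disjoint
              (Finset.disjoint_of_subset_left (Finset.erase_subset i D) hDE),
              Finset.card_erase_of_mem hiD]
          have hIcard : I.card ≤ n - (D.card - 1 + E.card) := by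
            calc I.card ≤ (Finset.univ \ (D.erase i ∪ E)).card := Finset.card_le_card hIsub
              _ = n - (D.card - 1 + E.card) := by
                  rw [Finset.card_sdiff_of_subset (Finset.subset_univ _), Finset.card_univ, hn, hcerase]
          have hD1 : 1 ≤ D.card := Finset.card_pos.2 ⟨i, hiD⟩
          have hE0 : E.card = 0 := by omega
          have hD3 : D.card = 3 := by omega
          have hEh1 : 0 < Eh.card := by omega
          have hI2 : I.card = n - 2 := by omega
          have hEemp : E = ∅ := Finset.card_eq_zero.1 hE0
          have hIsub' : I ⊆ Finset.univ \ D.erase i := by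
            intro a ha
            have := hIsub ha
            rwa [hEemp, Finset.union_empty] at this
          have hIeq : I = Finset.univ \ D.erase i := by
            apply Finset.eq_of_subset_of_card_le hIsub'
            rw [Finset.card_sdiff_of_subset (Finset.subset_univ _), Finset.card_univ, hn,
              Finset.card_erase_of_mem hiD, hD3, hI2]
          obtain ⟨e, he⟩ := Finset.card_pos.1 hEh1
          obtain ⟨p, q, hpq, hadjpq, hesh, _, _, hpI, hqI⟩ := hEh e he
          refine ⟨hD3, p, q, hpq, hadjpq, ?_, ?_⟩
          · by_contra hcon
            exact hpI (hIeq ▸ Finset.mem_sdiff.2 ⟨Finset.mem_univ _, hcon⟩)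
          · by_contra hcon
            exact hqI (hIeq ▸ Finset.mem_sdiff.2 ⟨Finset.mem_univ _, hcon⟩)
        obtain ⟨i0, hi0⟩ := hDne
        obtain ⟨hD3, p, q, hpq, hApq, hpD, hqD⟩ := key i0 hi0
        have hperase : D.erase i0 = {p, q} := by
          symm
          apply Finset.eq_of_subset_of_card_le
          · intro x hx
            rcases Finset.mem_insert.1 hx with rfl | hx
            · exact hpD
            · rw [Finset.mem_singleton] at hx; subst hx; exact hqD
          · rw [Finset.card_erase_of_mem hi0, hD3, Finset.card_pair hpq]
        have hmemD : ∀ x ∈ D, x = i0 ∨ x = p ∨ x = q := by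
          intro x hx
          by_cases hxi : x = i0
          · exact Or.inl hxi
          · have hxe : x ∈ D.erase i0 := Finset.mem_erase.2 ⟨hxi, hx⟩
            rw [hperase] at hxe
            rcases Finset.mem_insert.1 hxe with rfl | hxe
            · exact Or.inr (Or.inl rfl)
            · rw [Finset.mem_singleton] at hxe; exact Or.inr (Or.inr hxe)
        have hpD' : p ∈ D := Finset.mem_of_mem_erase hpD
        have hqD' : q ∈ D := Finset.mem_of_mem_erase hqD
        obtain ⟨_, r, s', hrs, hArs, hrD, hsD⟩ := key p hpD'
        have hr : r = i0 ∨ r = q := by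
          rcases hmemD r (Finset.mem_of_mem_erase hrD) with h | h | h
          · exact Or.inl h
          · exact absurd h (Finset.mem_erase.1 hrD).1
          · exact Or.inr h
        have hs : s' = i0 ∨ s' = q := by
          rcases hmemD s' (Finset.mem_of_mem_erase hsD) with h | h | h
          · exact Or.inl h
          · exact absurd h (Finset.mem_erase.1 hsD).1
          · exact Or.inr h
        have hAiq : H.Adj i0 q := by
          rcases hr with rfl | rfl <;> rcases hs with h | h
          · exact absurd h.symm hrs
          · exact h ▸ hArs
          · exact (h ▸ hArs).symm
          · exact absurd h.symm hrs
        obtain ⟨_, r2, s2, hrs2, hArs2, hrD2, hsD2⟩ := key q hqD'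
        have hr2 : r2 = i0 ∨ r2 = p := by
          rcases hmemD r2 (Finset.mem_of_mem_erase hrD2) with h | h | h
          · exact Or.inl h
          · exact Or.inr h
          · exact absurd h (Finset.mem_erase.1 hrD2).1
        have hs2 : s2 = i0 ∨ s2 = p := by
          rcases hmemD s2 (Finset.mem_of_mem_erase hsD2) with h | h | h
          · exact Or.inl h
          · exact Or.inr h
          · exact absurd h (Finset.mem_erase.1 hsD2).1
        have hAip : H.Adj i0 p := by
          rcases hr2 with rfl | rfl <;> rcases hs2 with h | h
          · exact absurd h.symm hrs2
          · exact h ▸ hArs2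
          · exact (h ▸ hArs2).symm
          · exact absurd h.symm hrs2
        exact hgirth (girth_eq_three_aux hAip hApq hAiq.symm)
    omega
  · -- the facet characterization
    intro u v huv
    have hface_pairs : ∀ a : V,
        ¬ MFFace (whisker H) (n - 1) (Finset.univ \ ({Sum.inl a, Sum.inr a} : Finset (V ⊕ V))) := by
      intro a
      apply nonface_of_pairs
      have hsub : Finset.univ.erase a ⊆ Finset.univ.filter (fun i : V =>
          (Sum.inl i : V ⊕ V) ∈ Finset.univ \ ({Sum.inl a, Sum.inr a} : Finset (V ⊕ V)) ∧
          (Sum.inr i : V ⊕ V) ∈ Finset.univ \ ({Sum.inl a, Sum.inr a} : Finset (V ⊕ V))) := by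
        intro i hi
        have hia : i ≠ a := Finset.ne_of_mem_erase hi
        refine Finset.mem_filter.2 ⟨Finset.mem_univ _, ?_, ?_⟩ <;>
          · rw [Finset.mem_sdiff, Finset.mem_insert, Finset.mem_singleton]
            simp [hia]
      calc n - 1 = (Finset.univ.erase a).card := by
            rw [Finset.card_erase_of_mem (Finset.mem_univ _), Finset.card_univ, hn]
        _ ≤ _ := Finset.card_le_card hsub
    constructor
    · rintro ⟨hface, hmax⟩
      cases u with
      | inl a =>
        cases v with
        | inl b => exact Or.inl ⟨a, b, rfl, rfl⟩
        | inr b =>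
          have hab : a ≠ b := by
            rintro rfl
            exact hface_pairs a hface
          exact Or.inr (Or.inr ⟨a, b, hab, Or.inl ⟨rfl, rfl⟩⟩)
      | inr a =>
        cases v with
        | inl b =>
          have hab : b ≠ a := by
            rintro rfl
            rw [Finset.pair_comm] at hface
            exact hface_pairs b hface
          exact Or.inr (Or.inr ⟨b, a, hab, Or.inr ⟨rfl, rfl⟩⟩)
        | inr b =>
          have hab : a ≠ b := fun h => huv (by rw [h])
          refine Or.inr (Or.inl ⟨a, b, rfl, rfl, ?_⟩)
          intro hAdj
          set S : Finset (V ⊕ V) := Finset.univ \ ({Sum.inr a, Sum.inr b} : Finset (V ⊕ V)) with hS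
          have hT : ∀ i ∈ Finset.univ.filter (fun k : V => k ≠ a ∧ k ≠ b),
              (Sum.inl i : V ⊕ V) ∈ S ∧ (Sum.inr i : V ⊕ V) ∈ S := by
            intro i hi
            obtain ⟨_, hi1, hi2⟩ := Finset.mem_filter.1 hi
            constructor <;>
              · rw [hS, Finset.mem_sdiff, Finset.mem_insert, Finset.mem_singleton]
                simp [hi1, hi2]
          obtain ⟨M, hM, hMc⟩ := exists_matching_of_pairs_plus H S _ hT a b hAdj
            (by rw [hS, Finset.mem_sdiff]; simp)
            (by rw [hS, Finset.mem_sdiff]; simp)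
            (by simp) (by simp)
          refine hface ⟨M, hM, ?_⟩
          rw [hMc, card_filter_ne2 hn a b hab]
          omega
    · intro hcond
      have hmax := facet_max H hn u v huv
      rcases hcond with ⟨a, b, rfl, rfl⟩ | ⟨a, b, rfl, rfl, hnadj⟩ | ⟨a, b, hab, ⟨rfl, rfl⟩ | ⟨rfl, rfl⟩⟩
      · have hab : a ≠ b := fun h => huv (by rw [h])
        exact ⟨faceA H hn hn2 a b hab, hmax⟩
      · have hab : a ≠ b := fun h => huv (by rw [h])
        exact ⟨faceB H hn hn2 a b hab hnadj, hmax⟩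
      · exact ⟨faceC H hn hn2 a b hab, hmax⟩
      · refine ⟨?_, hmax⟩
        rw [Finset.pair_comm]
        exact faceC H hn hn2 a b hab
end

section
/- Let G = W(C_6) be the whisker graph of the 6-cycle on vertices x_1,...,x_6 with whiskers y_1,...,y_6. Then the link of the face F = {x_1,...,x_6} in MF^4(G) is the independence complex of the complete bipartite graph K_{3,3} with bipartition {y_1,y_3,y_5} and {y_2,y_4,y_6}. Consequently MF^4(G) is not shellable. -/
variable {V : Type*}

/-- The cycle of length 6. -/
def C6 : SimpleGraph (Fin 6) where
  Adj i j := j = i + 1 ∨ i = j + 1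
  symm := ⟨fun _ _ h => h.symm⟩
  loopless := by constructor; intro i h; rcases h with h | h <;> exact absurd (congrArg (· - i) h.symm) (by simpa using one_ne_zero)



section AuxMF

open Finset

instance : DecidableRel C6.Adj := fun i j => decidable_of_iff (j = i + 1 ∨ i = j + 1) Iff.rfl
instance : DecidableRel (whisker C6).Adj := fun x y =>
  decidable_of_iff ((∃ a b, x = Sum.inl a ∧ y = Sum.inl b ∧ C6.Adj a b) ∨
    (∃ a, (x = Sum.inl a ∧ y = Sum.inr a) ∨ (x = Sum.inr a ∧ y = Sum.inl a))) Iff.rfl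

abbrev V2 := Fin 6 ⊕ Fin 6

def wEdge (i : Fin 6) : Sym2 V2 := s(Sum.inl i, Sum.inr i)
def cEdge (i : Fin 6) : Sym2 V2 := s(Sum.inl i, Sum.inl (i+1))

def buildM (i j : Fin 6) : Finset (Sym2 V2) :=
  if j = i + 1 then {wEdge i, wEdge j, cEdge (i+2), cEdge (i+4)}
  else if j = i + 3 then {wEdge i, wEdge j, cEdge (i+1), cEdge (i+4)}
  else {wEdge i, wEdge j, cEdge (i+1), cEdge (i+3)}

set_option maxRecDepth 8000 in
lemma bm_edges : ∀ i j : Fin 6, ∀ e ∈ buildM i j, e ∈ (whisker C6).edgeSet := by decide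

set_option maxRecDepth 8000 in
lemma bm_disj : ∀ i j : Fin 6, (i:ℕ) % 2 ≠ (j:ℕ) % 2 →
    ∀ e ∈ buildM i j, ∀ e' ∈ buildM i j, e ≠ e' → ∀ v ∈ e, v ∉ e' := by decide

set_option maxRecDepth 8000 in
lemma bm_card : ∀ i j : Fin 6, (i:ℕ) % 2 ≠ (j:ℕ) % 2 → (buildM i j).card = 4 := by decide

set_option maxRecDepth 8000 in
lemma bm_verts : ∀ i j : Fin 6, ∀ e ∈ buildM i j, ∀ v ∈ e,
    (∃ a, v = Sum.inl a) ∨ v = Sum.inr i ∨ v = Sum.inr j := by decide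

lemma build (F : Finset V2) (i j : Fin 6) (hp : (i:ℕ) % 2 ≠ (j:ℕ) % 2)
    (hXs : ∀ a : Fin 6, Sum.inl a ∈ F) (hi : Sum.inr i ∈ F) (hj : Sum.inr j ∈ F) :
    ∃ M, IsMatchingOn (whisker C6) F M ∧ M.card = 4 := by
  refine ⟨buildM i j, ⟨bm_edges i j, ?_, bm_disj i j hp⟩, bm_card i j hp⟩
  intro e he v hv
  rcases bm_verts i j e he v hv with ⟨a, rfl⟩ | rfl | rfl
  · exact hXs a
  · exact hi
  · exact hj

lemma c6_parity : ∀ a b : Fin 6, C6.Adj a b → (a:ℕ) % 2 + (b:ℕ) % 2 = 1 := by decide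

lemma no4 (F' : Finset V2) (p : ℕ) (hp : p < 2)
    (hall : ∀ z ∈ F', ∃ a : Fin 6, z = Sum.inr a ∧ (a:ℕ) % 2 = p) :
    MFFace (whisker C6) 4 (F' ∪ Finset.univ.image Sum.inl) := by
  rintro ⟨M, ⟨hE, hF, hD⟩, hcard⟩
  classical
  set T : Finset V2 := (Finset.univ.filter fun k : Fin 6 => (k:ℕ) % 2 = p).image Sum.inl with hTdef
  have hT : T.card ≤ 3 := by
    rw [hTdef, Finset.card_image_of_injective _ Sum.inl_injective]
    interval_cases p
    · decide
    · decide
  have memT : ∀ a : Fin 6, (a:ℕ) % 2 = p → Sum.inl a ∈ T := fun a h =>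
    Finset.mem_image_of_mem _ (Finset.mem_filter.2 ⟨Finset.mem_univ _, h⟩)
  have key0 : ∀ x y : V2, (whisker C6).Adj x y →
      (∀ v ∈ s(x,y), v ∈ F' ∪ Finset.univ.image Sum.inl) → ∃ v, v ∈ s(x,y) ∧ v ∈ T := by
    intro x y hadj hFe
    have hwhisk : ∀ a : Fin 6, Sum.inr a ∈ F' ∪ Finset.univ.image Sum.inl → Sum.inl a ∈ T := by
      intro a hmem
      rcases Finset.mem_union.1 hmem with h | h
      · obtain ⟨a', ha', hpar⟩ := hall _ h
        cases Sum.inr_injective ha'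
        exact memT _ hpar
      · exfalso
        obtain ⟨c, _, hc⟩ := Finset.mem_image.1 h
        exact Sum.inl_ne_inr hc
    rcases hadj with ⟨a, b, rfl, rfl, hab⟩ | ⟨a, ⟨rfl, rfl⟩ | ⟨rfl, rfl⟩⟩
    · have hsum := c6_parity a b hab
      have hor : (a:ℕ) % 2 = p ∨ (b:ℕ) % 2 = p := by omega
      rcases hor with h | h
      · exact ⟨Sum.inl a, Sym2.mem_mk_left _ _, memT a h⟩
      · exact ⟨Sum.inl b, Sym2.mem_mk_right _ _, memT b h⟩
    · exact ⟨Sum.inl a, Sym2.mem_mk_left _ _,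
        hwhisk a (hFe _ (Sym2.mem_mk_right _ _))⟩
    · exact ⟨Sum.inl a, Sym2.mem_mk_right _ _,
        hwhisk a (hFe _ (Sym2.mem_mk_left _ _))⟩
  have key : ∀ e ∈ M, ∃ v, v ∈ e ∧ v ∈ T := by
    intro e
    induction e using Sym2.ind with
    | _ x y =>
      exact fun hxy => key0 x y ((SimpleGraph.mem_edgeSet _).1 (hE _ hxy)) (hF _ hxy)
  let f : Sym2 V2 → V2 := fun e => if h : ∃ v, v ∈ e ∧ v ∈ T then h.choose else Sum.inl 0
  have spec : ∀ e ∈ M, f e ∈ e ∧ f e ∈ T := by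
    intro e he
    have h := key e he
    simp only [f, dif_pos h]
    exact h.choose_spec
  have hle : M.card ≤ T.card := by
    apply Finset.card_le_card_of_injOn f (fun e he => (spec e he).2)
    intro e he e' he' heq
    by_contra hne
    exact hD e (Finset.mem_coe.1 he) e' (Finset.mem_coe.1 he') hne (f e)
      (spec e (Finset.mem_coe.1 he)).1
      (by rw [heq]; exact (spec e' (Finset.mem_coe.1 he')).1)
  omega

lemma linkChar (F' : Finset V2) :
    (Disjoint F' (Finset.univ.image Sum.inl) ∧
        MFFace (whisker C6) 4 (F' ∪ Finset.univ.image Sum.inl)) ↔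
      ((∀ z ∈ F', ∃ i : Fin 6, z = Sum.inr i) ∧
        ∀ i j : Fin 6, Sum.inr i ∈ F' → Sum.inr j ∈ F' →
          (i : ℕ) % 2 = (j : ℕ) % 2) := by
  constructor
  · rintro ⟨hdis, hmf⟩
    constructor
    · intro z hz
      cases z with
      | inl a =>
        exact absurd (Finset.mem_image_of_mem (Sum.inl : Fin 6 → V2) (Finset.mem_univ a)) (Finset.disjoint_left.1 hdis hz)
      | inr a => exact ⟨a, rfl⟩
    · intro i j hi hj
      by_contra hp
      exact hmf (build _ i j hp
        (fun a => Finset.mem_union_right _ (Finset.mem_image_of_mem (Sum.inl : Fin 6 → V2) (Finset.mem_univ a)))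
        (Finset.mem_union_left _ hi) (Finset.mem_union_left _ hj))
  · rintro ⟨hall, hpar⟩
    have hdis : Disjoint F' (Finset.univ.image Sum.inl) := by
      rw [Finset.disjoint_left]
      intro z hz hz2
      obtain ⟨i, rfl⟩ := hall z hz
      obtain ⟨c, _, hc⟩ := Finset.mem_image.1 hz2
      exact Sum.inl_ne_inr hc
    refine ⟨hdis, ?_⟩
    by_cases h0 : ∀ a : Fin 6, Sum.inr a ∈ F' → (a:ℕ) % 2 = 0
    · exact no4 F' 0 (by norm_num) (fun z hz => by
        obtain ⟨a, rfl⟩ := hall z hz; exact ⟨a, rfl, h0 a hz⟩)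
    · push_neg at h0
      obtain ⟨a0, ha0, hpa0⟩ := h0
      have h1 : ∀ a : Fin 6, Sum.inr a ∈ F' → (a:ℕ) % 2 = 1 := by
        intro a ha
        have := hpar a a0 ha ha0
        omega
      exact no4 F' 1 (by norm_num) (fun z hz => by
        obtain ⟨a, rfl⟩ := hall z hz; exact ⟨a, rfl, h1 a hz⟩)

def E1 : Finset V2 := ({Sum.inr 0, Sum.inr 2, Sum.inr 4} : Finset V2) ∪ Finset.univ.image Sum.inl
def E2 : Finset V2 := ({Sum.inr 1, Sum.inr 3, Sum.inr 5} : Finset V2) ∪ Finset.univ.image Sum.inl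

lemma mfE1 : MFFace (whisker C6) 4 E1 := no4 _ 0 (by norm_num) (by decide)
lemma mfE2 : MFFace (whisker C6) 4 E2 := no4 _ 1 (by norm_num) (by decide)

lemma fin6_even : ∀ a : Fin 6, (a:ℕ) % 2 = 0 → a = 0 ∨ a = 2 ∨ a = 4 := by decide
lemma fin6_odd : ∀ a : Fin 6, (a:ℕ) % 2 = 1 → a = 1 ∨ a = 3 ∨ a = 5 := by decide

lemma face_sub (F'' : Finset V2) (hmf : MFFace (whisker C6) 4 F'')
    (hX : ∀ a : Fin 6, Sum.inl a ∈ F'') : F'' ⊆ E1 ∨ F'' ⊆ E2 := by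
  have hpar : ∀ i j : Fin 6, Sum.inr i ∈ F'' → Sum.inr j ∈ F'' → (i:ℕ) % 2 = (j:ℕ) % 2 := by
    intro i j hi hj; by_contra hp; exact hmf (build F'' i j hp hX hi hj)
  by_cases h0 : ∀ a : Fin 6, Sum.inr a ∈ F'' → (a:ℕ) % 2 = 0
  · left
    intro z hz
    cases z with
    | inl a => exact Finset.mem_union_right _ (Finset.mem_image_of_mem (Sum.inl : Fin 6 → V2) (Finset.mem_univ a))
    | inr a =>
      rcases fin6_even a (h0 a hz) with rfl | rfl | rfl <;> decide
  · right
    push_neg at h0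
    obtain ⟨a0, ha0, hp0⟩ := h0
    have h1 : ∀ a : Fin 6, Sum.inr a ∈ F'' → (a:ℕ) % 2 = 1 := by
      intro a ha
      have := hpar a a0 ha ha0
      omega
    intro z hz
    cases z with
    | inl a => exact Finset.mem_union_right _ (Finset.mem_image_of_mem (Sum.inl : Fin 6 → V2) (Finset.mem_univ a))
    | inr a =>
      rcases fin6_odd a (h1 a hz) with rfl | rfl | rfl <;> decide

lemma facetE1 : IsFacet (MFFace (whisker C6) 4) E1 := by
  refine ⟨mfE1, fun F'' hf hsub => ?_⟩
  have hX : ∀ a : Fin 6, Sum.inl a ∈ F'' := fun a =>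
    hsub (Finset.mem_union_right _ (Finset.mem_image_of_mem (Sum.inl : Fin 6 → V2) (Finset.mem_univ a)))
  rcases face_sub F'' hf hX with h | h
  · exact Finset.Subset.antisymm hsub h
  · exfalso
    have h02 : Sum.inr (0:Fin 6) ∈ E2 := h (hsub (by decide))
    revert h02; decide

lemma facetE2 : IsFacet (MFFace (whisker C6) 4) E2 := by
  refine ⟨mfE2, fun F'' hf hsub => ?_⟩
  have hX : ∀ a : Fin 6, Sum.inl a ∈ F'' := fun a =>
    hsub (Finset.mem_union_right _ (Finset.mem_image_of_mem (Sum.inl : Fin 6 → V2) (Finset.mem_univ a)))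
  rcases face_sub F'' hf hX with h | h
  · exfalso
    have h02 : Sum.inr (1:Fin 6) ∈ E1 := h (hsub (by decide))
    revert h02; decide
  · exact Finset.Subset.antisymm hsub h

lemma notShell : ¬ Shellable (MFFace (whisker C6) 4) := by
  rintro ⟨t, F, hfac, hsurj, hinj, hshell⟩
  obtain ⟨a, ha⟩ := hsurj E1 facetE1
  obtain ⟨b, hb⟩ := hsurj E2 facetE2
  have hXsub : ∀ G : Finset V2, G = E1 ∨ G = E2 → Finset.univ.image Sum.inl ⊆ G := by
    rintro G (rfl | rfl) <;> exact Finset.subset_union_right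
  have hfsub : ∀ j : Fin t, Finset.univ.image Sum.inl ⊆ F j → F j = E1 ∨ F j = E2 := by
    intro j hXj
    have hX : ∀ a : Fin 6, Sum.inl a ∈ F j := fun a =>
      hXj (Finset.mem_image_of_mem (Sum.inl : Fin 6 → V2) (Finset.mem_univ a))
    rcases face_sub (F j) (hfac j).1 hX with h | h
    · exact Or.inl ((hfac j).2 E1 mfE1 h)
    · exact Or.inr ((hfac j).2 E2 mfE2 h)
  have core : ∀ k i : Fin t, i < k → (F k = E1 ∨ F k = E2) → (F i = E1 ∨ F i = E2) → False := by
    intro k i hik hk hi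
    have hkpos : 0 < (k:ℕ) := lt_of_le_of_lt (Nat.zero_le _) hik
    obtain ⟨τ, hστ, hτk, ⟨j, hjk, hτj⟩, hcardτ⟩ :=
      hshell k hkpos (Finset.univ.image Sum.inl) (hXsub _ hk) ⟨i, hik, hXsub _ hi⟩
    have hj2 := hfsub j (hστ.trans hτj)
    have hjk' : F j ≠ F k := fun h => absurd (hinj h) (Fin.ne_of_lt hjk)
    have hcard9 : (F k).card = 9 := by rcases hk with h | h <;> rw [h] <;> decide
    have hτsub : τ ⊆ E1 ∩ E2 := by
      rcases hk with hk' | hk' <;> rcases hj2 with hj' | hj'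
      · exact absurd (hj'.trans hk'.symm) hjk'
      · refine Finset.subset_inter ?_ ?_
        · rw [← hk']; exact hτk
        · rw [← hj']; exact hτj
      · refine Finset.subset_inter ?_ ?_
        · rw [← hj']; exact hτj
        · rw [← hk']; exact hτk
      · exact absurd (hj'.trans hk'.symm) hjk'
    have h6 : (E1 ∩ E2).card = 6 := by decide
    have hle := Finset.card_le_card hτsub
    omega
  have hab : a ≠ b := by
    intro h
    rw [h] at ha
    have hEE : E1 = E2 := ha.trans hb.symm
    revert hEE; decide
  rcases lt_or_gt_of_ne hab with h | h
  · exact core b a h (Or.inr hb.symm) (Or.inl ha.symm)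
  · exact core a b h (Or.inl ha.symm) (Or.inr hb.symm)

end AuxMF

/-- the link of the face `{x₁,…,x₆}` in `MF^4(W(C₆))` is the
independence complex of `K₃,₃` on the whisker vertices (bipartition by the parity
of the index), and consequently `MF^4(W(C₆))` is not shellable. -/
theorem mfComplex_whisker_C6_link_and_not_shellable :
    (∀ F' : Finset (Fin 6 ⊕ Fin 6),
      (Disjoint F' (Finset.univ.image Sum.inl) ∧
        MFFace (whisker C6) 4 (F' ∪ Finset.univ.image Sum.inl)) ↔
      ((∀ z ∈ F', ∃ i : Fin 6, z = Sum.inr i) ∧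
        ∀ i j : Fin 6, Sum.inr i ∈ F' → Sum.inr j ∈ F' →
          (i : ℕ) % 2 = (j : ℕ) % 2)) ∧
    ¬ Shellable (MFFace (whisker C6) 4) :=
  ⟨fun F' => linkChar F', notShell⟩
end

section
/- Let H be a graph on n vertices with girth m, odd and finite, and G = W(H), q = (m+1)/2. Then the minimum cardinality of a facet of MF^q(G) equals n. In particular, taking an odd cycle C of length m in H and S = V(H) \ V(C), the set consisting of V(C) together with all whisker vertices of vertices in S is a facet of MF^q(G) of cardinality n. -/
variable {V : Type*}

section Aux

open SimpleGraph

private lemma getVert_eq_support_getD {V : Type*} {G : SimpleGraph V} {u v : V} (p : G.Walk u v) :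
    ∀ i, i ≤ p.length → p.support.getD i u = p.getVert i := by
  induction p with
  | nil => intro i hi; have : i = 0 := by simpa using hi
           subst this; simp [SimpleGraph.Walk.getVert]
  | @cons a b c h q ih =>
    intro i hi
    cases i with
    | zero => simp
    | succ j =>
      have hj : j ≤ q.length := by simpa [Walk.length_cons] using hi
      have hle : j < q.support.length := by rw [Walk.length_support]; omega
      have h2 := ih j hj
      simp only [Walk.support_cons, List.getD_cons_succ, Walk.getVert_cons_succ]
      rw [List.getD_eq_getElem _ _ hle]
      rw [List.getD_eq_getElem _ _ hle] at h2
      exact h2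

private lemma cycle_getVert_inj {V : Type*} {G : SimpleGraph V} {v : V} (w : G.Walk v v)
    (hc : w.IsCycle) {i j : ℕ} (hi1 : 1 ≤ i) (hi : i ≤ w.length)
    (hj1 : 1 ≤ j) (hj : j ≤ w.length) (h : w.getVert i = w.getVert j) : i = j := by
  have hl : w.support.tail.length = w.length := by
    have h1 := w.length_support
    rw [w.support_eq_cons] at h1; simpa using h1.symm
  have hget : ∀ k, 1 ≤ k → k ≤ w.length → w.support.tail.getD (k-1) v = w.getVert k := by
    intro k hk1 hk
    have h3 := getVert_eq_support_getD w k hk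
    rw [w.support_eq_cons] at h3
    rcases Nat.exists_eq_add_of_le hk1 with ⟨k', rfl⟩
    simpa [List.getD_cons_succ, Nat.add_comm] using h3
  have h1 := hget i hi1 hi
  have h2 := hget j hj1 hj
  rw [← h1, ← h2] at h
  have hnd := hc.support_nodup
  rw [List.getD_eq_getElem _ _ (by omega), List.getD_eq_getElem _ _ (by omega)] at h
  have hinj := List.nodup_iff_injective_get.mp hnd
  have := @hinj ⟨i-1, by omega⟩ ⟨j-1, by omega⟩ (by simpa [List.get_eq_getElem] using h)
  have := Fin.mk.inj_iff.mp this
  omega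

private lemma cycle_support_toFinset_card {V : Type*} [DecidableEq V] {G : SimpleGraph V}
    {v : V} (w : G.Walk v v) (hc : w.IsCycle) :
    w.support.toFinset.card = w.length := by
  have h3 := hc.three_le_length
  have hl : w.support.tail.length = w.length := by
    have h1 := w.length_support
    rw [w.support_eq_cons] at h1; simpa using h1.symm
  have hv : v ∈ w.support.tail := by
    have h3' := getVert_eq_support_getD w w.length le_rfl
    rw [w.support_eq_cons] at h3'
    rcases Nat.exists_eq_add_of_le (show 1 ≤ w.length by omega) with ⟨k', hk'⟩
    rw [hk', Nat.add_comm 1 k', List.getD_cons_succ] at h3'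
    rw [List.getD_eq_getElem _ _ (by omega)] at h3'
    have hvv : w.getVert (w.length) = v := w.getVert_length
    rw [hk', Nat.add_comm 1 k'] at hvv
    rw [hvv] at h3'
    have hmem := List.getElem_mem (show k' < w.support.tail.length by omega)
    rwa [h3'] at hmem
  have : w.support.toFinset = w.support.tail.toFinset := by
    conv_lhs => rw [w.support_eq_cons]
    rw [List.toFinset_cons, Finset.insert_eq_self.mpr (List.mem_toFinset.mpr hv)]
  rw [this, List.toFinset_card_of_nodup hc.support_nodup, hl]

private lemma matching_count {W : Type*} [DecidableEq W] (G : SimpleGraph W) (T : Finset W) :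
    ∀ (M : Finset (Sym2 W)), (∀ e ∈ M, e ∈ G.edgeSet) →
    (∀ e ∈ M, ∀ v ∈ e, v ∈ T) →
    (∀ e ∈ M, ∀ e' ∈ M, e ≠ e' → ∀ v ∈ e, v ∉ e') →
    2 * M.card ≤ T.card := by
  classical
  intro M
  induction M using Finset.strongInduction generalizing T with
  | _ M ih =>
    rcases M.eq_empty_or_nonempty with rfl | ⟨e, he⟩
    · simp
    intro hE hT hD
    induction e using Sym2.ind with
    | _ x y =>
    have hxy : x ≠ y := (G.ne_of_adj (hE _ he))
    have hx : x ∈ T := hT _ he x (by simp)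
    have hy : y ∈ T := hT _ he y (by simp)
    have hsub : ({x, y} : Finset W) ⊆ T := by
      intro z hz; simp at hz; rcases hz with rfl | rfl <;> assumption
    have key := ih (M.erase s(x,y)) (Finset.erase_ssubset he) (T \ {x, y})
      (fun e' he' => hE _ (Finset.mem_of_mem_erase he'))
      (fun e' he' v hv => by
        have hne : s(x,y) ≠ e' := (Finset.ne_of_mem_erase he').symm
        have hnv : v ∉ s(x,y) := fun hvx => hD _ he _ (Finset.mem_of_mem_erase he') hne v hvx hv
        simp only [Finset.mem_sdiff]
        refine ⟨hT _ (Finset.mem_of_mem_erase he') v hv, ?_⟩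
        simp only [Finset.mem_insert, Finset.mem_singleton]
        rintro (rfl | rfl) <;> exact hnv (by simp))
      (fun e1 h1 e2 h2 hne => hD _ (Finset.mem_of_mem_erase h1) _ (Finset.mem_of_mem_erase h2) hne)
    have hcard : (T \ {x,y}).card = T.card - 2 := by
      rw [Finset.card_sdiff_of_subset hsub, Finset.card_insert_of_notMem (by simpa using hxy),
        Finset.card_singleton]
    have hM : (M.erase s(x,y)).card = M.card - 1 := Finset.card_erase_of_mem he
    have h2 : 2 ≤ T.card := le_trans
      (by simp [Finset.card_insert_of_notMem, hxy]) (Finset.card_le_card hsub)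
    have hM1 : 1 ≤ M.card := Finset.card_pos.mpr ⟨_, he⟩
    omega

private lemma cycle_matching {V : Type*} [DecidableEq V] {H : SimpleGraph V} {v : V}
    (w : H.Walk v v) (hc : w.IsCycle) (q' : ℕ) (hlen : w.length = 2 * q' + 1) :
    ∃ M : Finset (Sym2 V), M.card = q' ∧ (∀ e ∈ M, e ∈ H.edgeSet) ∧
      (∀ e ∈ M, ∀ x ∈ e, x ∈ w.support ∧ x ≠ v) ∧
      (∀ e ∈ M, ∀ e' ∈ M, e ≠ e' → ∀ x ∈ e, x ∉ e') := by
  classical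
  set m := w.length with hm
  set p : ℕ → V := w.getVert with hp
  have hinj : ∀ i j : ℕ, 1 ≤ i → i ≤ m → 1 ≤ j → j ≤ m → p i = p j → i = j :=
    fun i j a b c d h => cycle_getVert_inj w hc a b c d h
  have hvne : ∀ i, 1 ≤ i → i ≤ m - 1 → p i ≠ v := by
    intro i h1 h2 hv
    have hvm : p m = v := w.getVert_length
    have := hinj i m h1 (by omega) (by omega) le_rfl (hv.trans hvm.symm)
    omega
  refine ⟨(Finset.range q').image (fun k => s(p (2*k+1), p (2*k+2))), ?_, ?_, ?_, ?_⟩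
  · rw [Finset.card_image_of_injOn, Finset.card_range]
    intro k hk l hl h
    simp only [Finset.coe_range, Set.mem_Iio] at hk hl
    rw [Sym2.eq_iff] at h
    rcases h with ⟨h1, _⟩ | ⟨h1, h2⟩
    · have := hinj _ _ (by omega) (by omega) (by omega) (by omega) h1; omega
    · have := hinj _ _ (by omega) (by omega) (by omega) (by omega) h1; omega
  · intro e he
    simp only [Finset.mem_image, Finset.mem_range] at he
    obtain ⟨k, hk, rfl⟩ := he
    exact w.adj_getVert_succ (by omega)
  · intro e he x hx
    simp only [Finset.mem_image, Finset.mem_range] at he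
    obtain ⟨k, hk, rfl⟩ := he
    rw [Sym2.mem_iff] at hx
    constructor
    · rw [Walk.mem_support_iff_exists_getVert]
      rcases hx with rfl | rfl
      exacts [⟨2*k+1, rfl, by omega⟩, ⟨2*k+2, rfl, by omega⟩]
    · rcases hx with rfl | rfl
      exacts [hvne _ (by omega) (by omega), hvne _ (by omega) (by omega)]
  · intro e he e' he' hne x hx hx'
    simp only [Finset.mem_image, Finset.mem_range] at he he'
    obtain ⟨k, hk, rfl⟩ := he
    obtain ⟨l, hl, rfl⟩ := he'
    rw [Sym2.mem_iff] at hx hx'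
    have hkl : k ≠ l := by rintro rfl; exact hne rfl
    rcases hx with rfl | rfl <;> rcases hx' with h | h <;>
      [skip; skip; skip; skip] <;>
      · have := hinj _ _ (by omega) (by omega) (by omega) (by omega) h; omega

private lemma sym2_map_inl_edge {V : Type*} {H : SimpleGraph V} (e₀ : Sym2 V)
    (h : e₀ ∈ H.edgeSet) : Sym2.map Sum.inl e₀ ∈ (whisker H).edgeSet := by
  induction e₀ using Sym2.ind with
  | _ x y => exact Or.inl ⟨x, y, rfl, rfl, h⟩

private lemma whisker_adj_inl_of_adj {V : Type*} {H : SimpleGraph V} {a b : V} (h : H.Adj a b) :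
    (whisker H).Adj (Sum.inl a) (Sum.inl b) := Or.inl ⟨a, b, rfl, rfl, h⟩

private lemma whisker_pendant {V : Type*} (H : SimpleGraph V) (a : V) :
    (whisker H).Adj (Sum.inl a) (Sum.inr a) := Or.inr ⟨a, Or.inl ⟨rfl, rfl⟩⟩

/-- Construct a `(q'+1)`-matching on any set containing both copies of `a`
and the left copies of a cycle's support. -/
private lemma whisker_q_matching {V : Type*} [DecidableEq V] {H : SimpleGraph V} {u : V}
    (c : H.Walk u u) (hc : c.IsCycle) (q' : ℕ) (hlen : c.length = 2 * q' + 1)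
    (a : V) (ha : a ∉ c.support ∨ a = u) (F' : Finset (V ⊕ V))
    (h1 : Sum.inl a ∈ F') (h2 : Sum.inr a ∈ F')
    (h3 : ∀ x ∈ c.support, Sum.inl x ∈ F') :
    ∃ M : Finset (Sym2 (V ⊕ V)), IsMatchingOn (whisker H) F' M ∧ M.card = q' + 1 := by
  classical
  obtain ⟨M₀, hcard, hE, hS, hD⟩ := cycle_matching c hc q' hlen
  have hxa : ∀ e ∈ M₀, ∀ x ∈ e, x ≠ a := by
    intro e he x hx hxe
    obtain ⟨hmem, hne⟩ := hS e he x hx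
    rcases ha with h | h
    · exact h (hxe ▸ hmem)
    · exact hne (hxe.trans h)
  refine ⟨insert s(Sum.inl a, Sum.inr a) (M₀.image (Sym2.map Sum.inl)), ⟨?_, ?_, ?_⟩, ?_⟩
  · -- edges
    intro e he
    rcases Finset.mem_insert.mp he with rfl | he
    · exact whisker_pendant H a
    · obtain ⟨e₀, he₀, rfl⟩ := Finset.mem_image.mp he
      exact sym2_map_inl_edge e₀ (hE _ he₀)
  · -- endpoints in F'
    intro e he z hz
    rcases Finset.mem_insert.mp he with rfl | he
    · rw [Sym2.mem_iff] at hz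
      rcases hz with rfl | rfl <;> assumption
    · obtain ⟨e₀, he₀, rfl⟩ := Finset.mem_image.mp he
      obtain ⟨x, hx, rfl⟩ := Sym2.mem_map.mp hz
      exact h3 x (hS _ he₀ x hx).1
  · -- pairwise disjoint
    intro e he e' he' hne z hz hz'
    rcases Finset.mem_insert.mp he with rfl | he <;>
      rcases Finset.mem_insert.mp he' with rfl | he'
    · exact hne rfl
    · obtain ⟨e₀, he₀, rfl⟩ := Finset.mem_image.mp he'
      obtain ⟨x, hx, rfl⟩ := Sym2.mem_map.mp hz'
      rw [Sym2.mem_iff] at hz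
      rcases hz with h | h
      · exact hxa _ he₀ x hx (Sum.inl_injective h)
      · exact Sum.inl_ne_inr h
    · obtain ⟨e₀, he₀, rfl⟩ := Finset.mem_image.mp he
      obtain ⟨x, hx, rfl⟩ := Sym2.mem_map.mp hz
      rw [Sym2.mem_iff] at hz'
      rcases hz' with h | h
      · exact hxa _ he₀ x hx (Sum.inl_injective h)
      · exact Sum.inl_ne_inr h
    · obtain ⟨e₀, he₀, rfl⟩ := Finset.mem_image.mp he
      obtain ⟨e₁, he₁, rfl⟩ := Finset.mem_image.mp he'
      obtain ⟨x, hx, rfl⟩ := Sym2.mem_map.mp hz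
      obtain ⟨y, hy, hxy⟩ := Sym2.mem_map.mp hz'
      have hne₀ : e₀ ≠ e₁ := fun h => hne (by rw [h])
      exact hD _ he₀ _ he₁ hne₀ x hx (Sum.inl_injective hxy ▸ hy)
  · -- cardinality
    rw [Finset.card_insert_of_notMem, Finset.card_image_of_injective _
      (Sym2.map.injective Sum.inl_injective), hcard]
    intro hmem
    obtain ⟨e₀, he₀, heq⟩ := Finset.mem_image.mp hmem
    have : Sum.inr a ∈ Sym2.map Sum.inl e₀ := heq ▸ (by simp : (Sum.inr a : V ⊕ V) ∈ s(Sum.inl a, Sum.inr a))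
    obtain ⟨x, _, hx⟩ := Sym2.mem_map.mp this
    exact Sum.inl_ne_inr hx

private lemma whisker_pendant_mem {V : Type*} {H : SimpleGraph V} (a : V) :
    ∀ e : Sym2 (V ⊕ V), e ∈ (whisker H).edgeSet → Sum.inr a ∈ e → Sum.inl a ∈ e := by
  intro e
  induction e using Sym2.ind with
  | _ x y =>
    intro hadj hmem
    rw [Sym2.mem_iff] at hmem ⊢
    rcases hadj with ⟨c, d, hx, hy, _⟩ | ⟨c, ⟨hx, hy⟩ | ⟨hx, hy⟩⟩ <;> subst hx <;> subst hy <;>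
      rcases hmem with h | h <;> simp_all

private lemma cycleF_face {V : Type*} [Fintype V] [DecidableEq V] {H : SimpleGraph V} {v : V}
    (w : H.Walk v v) (hc : w.IsCycle) (q' : ℕ) (hlen : w.length = 2 * q' + 1) :
    MFFace (whisker H) (q' + 1)
      ((w.support.toFinset.image Sum.inl) ∪
        ((Finset.univ \ w.support.toFinset).image Sum.inr)) := by
  classical
  set Fw := (w.support.toFinset.image Sum.inl) ∪
      ((Finset.univ \ w.support.toFinset).image Sum.inr) with hFwdef
  have hinlFw : ∀ x : V, Sum.inl x ∈ Fw ↔ x ∈ w.support := by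
    intro x; simp [hFwdef]
  have hinrFw : ∀ x : V, Sum.inr x ∈ Fw ↔ x ∉ w.support := by
    intro x; simp [hFwdef]
  rintro ⟨M, ⟨hE, hF, hD⟩, hcard⟩
  have key : ∀ e : Sym2 (V ⊕ V), e ∈ (whisker H).edgeSet → (∀ z' ∈ e, z' ∈ Fw) →
      ∀ z ∈ e, z ∈ w.support.toFinset.image Sum.inl := by
    intro e
    induction e using Sym2.ind with
    | _ x y =>
      intro hadj hmem z hz
      rcases hadj with ⟨c, d, hx, hy, _⟩ | ⟨c, ⟨hx, hy⟩ | ⟨hx, hy⟩⟩ <;> subst hx <;> subst hy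
      · have hcs : c ∈ w.support := (hinlFw c).mp (hmem _ (by simp))
        have hds : d ∈ w.support := (hinlFw d).mp (hmem _ (Sym2.mem_mk_right _ _))
        rw [Sym2.mem_iff] at hz
        rcases hz with rfl | rfl <;> simp only [Finset.mem_image] <;>
          [exact ⟨c, List.mem_toFinset.mpr hcs, rfl⟩; exact ⟨d, List.mem_toFinset.mpr hds, rfl⟩]
      · have h1 : c ∈ w.support := (hinlFw c).mp (hmem _ (by simp))
        have h2 : c ∉ w.support := (hinrFw c).mp (hmem _ (Sym2.mem_mk_right _ _))
        exact absurd h1 h2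
      · have h1 : c ∈ w.support := (hinlFw c).mp (hmem _ (Sym2.mem_mk_right _ _))
        have h2 : c ∉ w.support := (hinrFw c).mp (hmem _ (by simp))
        exact absurd h1 h2
  have hcount := matching_count (whisker H) (w.support.toFinset.image Sum.inl) M hE
    (fun e he z hz => key e (hE e he) (fun z' hz' => hF e he z' hz') z hz) hD
  rw [Finset.card_image_of_injective _ Sum.inl_injective,
    cycle_support_toFinset_card w hc, hlen, hcard] at hcount
  omega

end Aux

/-- if `H` has odd finite girth `m` and `q = (m+1)/2`, then the minimum
cardinality of a facet of `MF^q(W(H))` is `n`; in particular, for any cycle `C` of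
length `m` in `H`, the set `V(C) ∪ {y_a : a ∉ V(C)}` is a facet of cardinality `n`. -/
theorem min_facet_card_of_odd_girth
    {V : Type*} [Fintype V] [DecidableEq V] (H : SimpleGraph V)
    (n m q : ℕ) (hn : Fintype.card V = n) (hm : H.girth = (m : ℕ∞)) (hodd : Odd m)
    (hq : q = (m + 1) / 2) :
    (∀ F : Finset (V ⊕ V), IsFacet (MFFace (whisker H) q) F → n ≤ F.card) ∧
    (∃ F : Finset (V ⊕ V), IsFacet (MFFace (whisker H) q) F ∧ F.card = n) ∧
    (∀ (v : V) (w : H.Walk v v), w.IsCycle → w.length = m →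
      IsFacet (MFFace (whisker H) q)
        ((w.support.toFinset.image Sum.inl) ∪
          ((Finset.univ \ w.support.toFinset).image Sum.inr)) ∧
      ((w.support.toFinset.image Sum.inl) ∪
        ((Finset.univ \ w.support.toFinset).image Sum.inr)).card = n) := by
  classical
  have hgm : H.girth = m := by exact_mod_cast hm
  have hm2 : m % 2 = 1 := Nat.odd_iff.mp hodd
  have hnac : ¬ H.IsAcyclic := by
    intro h
    rw [SimpleGraph.girth_eq_zero.mpr h] at hgm
    omega
  obtain ⟨a₀, w₀, hc₀, hl₀⟩ := SimpleGraph.exists_girth_eq_length.mpr hnac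
  have hw₀ : w₀.length = m := by rw [← hgm, hl₀]
  have hm3 : 3 ≤ m := hw₀ ▸ hc₀.three_le_length
  have hq1 : q = (q - 1) + 1 := by omega
  have hmq : m = 2 * (q - 1) + 1 := by omega
  -- Part 3
  have part3 : ∀ (v : V) (w : H.Walk v v), w.IsCycle → w.length = m →
      IsFacet (MFFace (whisker H) q)
        ((w.support.toFinset.image Sum.inl) ∪
          ((Finset.univ \ w.support.toFinset).image Sum.inr)) ∧
      ((w.support.toFinset.image Sum.inl) ∪
        ((Finset.univ \ w.support.toFinset).image Sum.inr)).card = n := by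
    intro v w hcyc hwl
    set Fw := (w.support.toFinset.image Sum.inl) ∪
        ((Finset.univ \ w.support.toFinset).image Sum.inr) with hFwdef
    have hinlFw : ∀ x : V, Sum.inl x ∈ Fw ↔ x ∈ w.support := by
      intro x; simp [hFwdef]
    have hinrFw : ∀ x : V, Sum.inr x ∈ Fw ↔ x ∉ w.support := by
      intro x; simp [hFwdef]
    have hface : MFFace (whisker H) q Fw := by
      rw [hq1]
      exact cycleF_face w hcyc (q - 1) (by omega)
    have hmn : m ≤ n := by
      rw [← hn, ← Finset.card_univ, ← hwl, ← cycle_support_toFinset_card w hcyc]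
      exact Finset.card_le_card (Finset.subset_univ _)
    have hFwcard : Fw.card = n := by
      rw [hFwdef, Finset.card_union_of_disjoint, Finset.card_image_of_injective _
          Sum.inl_injective, Finset.card_image_of_injective _ Sum.inr_injective,
          Finset.card_sdiff_of_subset (Finset.subset_univ _), Finset.card_univ, hn,
          cycle_support_toFinset_card w hcyc, hwl]
      · omega
      · rw [Finset.disjoint_left]
        intro z hz1 hz2
        obtain ⟨x, _, rfl⟩ := Finset.mem_image.mp hz1
        obtain ⟨y, _, hy⟩ := Finset.mem_image.mp hz2
        exact Sum.inr_ne_inl hy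
    refine ⟨⟨hface, ?_⟩, hFwcard⟩
    intro F' hF' hsub
    by_contra hne
    obtain ⟨z, hzF', hzFw⟩ := Finset.exists_of_ssubset (Finset.ssubset_iff_subset_ne.mpr ⟨hsub, hne⟩)
    have hinl : ∀ x ∈ w.support, Sum.inl x ∈ F' := fun x hx => hsub ((hinlFw x).mpr hx)
    cases z with
    | inl a =>
      have hans : a ∉ w.support := fun h => hzFw ((hinlFw a).mpr h)
      obtain ⟨M, hM, hMc⟩ := whisker_q_matching w hcyc (q - 1) (by omega) a (Or.inl hans) F'
        hzF' (hsub ((hinrFw a).mpr hans)) hinl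
      exact hF' ⟨M, hM, by omega⟩
    | inr a =>
      have has : a ∈ w.support := by
        by_contra h; exact hzFw ((hinrFw a).mpr h)
      have hcc := hcyc.rotate has
      have hclen : (w.rotate a has).length = m := by
        rw [← hwl, ← SimpleGraph.Walk.length_edges, ← SimpleGraph.Walk.length_edges]
        exact (w.rotate_edges a has).perm.length_eq
      have hsupc : ∀ x ∈ (w.rotate a has).support, x ∈ w.support := by
        intro x hx
        rw [SimpleGraph.Walk.support_eq_cons] at hx
        rcases List.mem_cons.mp hx with rfl | hx
        · exact has
        · exact List.mem_of_mem_tail ((w.support_rotate a has).mem_iff.mp hx)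
      obtain ⟨M, hM, hMc⟩ := whisker_q_matching (w.rotate a has) hcc (q - 1) (by omega) a
        (Or.inr rfl) F' (hinl a has) hzF' (fun x hx => hinl x (hsupc x hx))
      exact hF' ⟨M, hM, by omega⟩
  refine ⟨?_, ⟨_, (part3 a₀ w₀ hc₀ hw₀).1, (part3 a₀ w₀ hc₀ hw₀).2⟩, part3⟩
  -- Part 1
  rintro F ⟨hface, hmax⟩
  have hcover : ∀ a : V, Sum.inl a ∈ F ∨ Sum.inr a ∈ F := by
    intro a
    by_contra hcon
    push_neg at hcon
    obtain ⟨h1, h2⟩ := hcon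
    have hface' : MFFace (whisker H) q (insert (Sum.inr a) F) := by
      rintro ⟨M, ⟨hE, hFm, hD⟩, hMc⟩
      apply hface
      refine ⟨M, ⟨hE, ?_, hD⟩, hMc⟩
      intro e he z hz
      have hzF := hFm e he z hz
      rcases Finset.mem_insert.mp hzF with rfl | h
      · exfalso
        have hl := whisker_pendant_mem a e (hE e he) hz
        have := hFm e he _ hl
        rcases Finset.mem_insert.mp this with h' | h'
        · exact Sum.inl_ne_inr h'
        · exact h1 h'
      · exact h
    have := hmax _ hface' (Finset.subset_insert _ _)
    exact h2 (this ▸ Finset.mem_insert_self _ _)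
  have hinj : (Finset.univ : Finset V).card ≤ F.card := by
    apply Finset.card_le_card_of_injOn
      (fun a => if Sum.inl a ∈ F then Sum.inl a else Sum.inr a)
    · intro a _
      dsimp only
      split_ifs with h
      · exact h
      · exact (hcover a).resolve_left h
    · intro a _ b _ hab
      dsimp only at hab
      split_ifs at hab <;>
        first
          | exact Sum.inl_injective hab
          | exact Sum.inr_injective hab
          | exact absurd hab (by simp)
  rwa [Finset.card_univ, hn] at hinj
end

section
/- Let G = W(H) be a whisker graph where H is a forest on n vertices. Then for every 1 ≤ q ≤ ν(G), the complex MF^q(G) is pure shellable of dimension n + q − 2; equivalently, the squarefree power I(G)^[q] is Cohen–Macaulay with depth(R/I(G)^[q]) = n + q − 1. -/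
variable {V : Type*}

/-! ### Auxiliary development -/

section Aux

open Finset

lemma sym2_exists_rep {W : Type*} (e : Sym2 W) : ∃ a b, e = s(a, b) :=
  Sym2.ind (fun a b => ⟨a, b, rfl⟩) e

lemma isMatchingOn_empty {W : Type*} (G : SimpleGraph W) (F : Finset W) :
    IsMatchingOn G F (∅ : Finset (Sym2 W)) := by
  refine ⟨by simp, by simp, by simp⟩

lemma isMatchingOn_subset {W : Type*} {G : SimpleGraph W} {F : Finset W}
    {M N : Finset (Sym2 W)} (h : IsMatchingOn G F M) (hNM : N ⊆ M) :
    IsMatchingOn G F N :=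
  ⟨fun e he => h.1 e (hNM he), fun e he => h.2.1 e (hNM he),
    fun e he e' he' hne => h.2.2 e (hNM he) e' (hNM he') hne⟩

lemma isMatchingOn_mono {W : Type*} {G : SimpleGraph W} {F F' : Finset W}
    {M : Finset (Sym2 W)} (h : IsMatchingOn G F M) (hFF : F ⊆ F') :
    IsMatchingOn G F' M :=
  ⟨h.1, fun e he v hv => hFF (h.2.1 e he v hv), h.2.2⟩

open Classical in
/-- The maximum size of a matching on `F`. -/
noncomputable def nuOn {W : Type*} [Fintype W] [DecidableEq W]
    (G : SimpleGraph W) (F : Finset W) : ℕ :=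
  Finset.univ.sup (fun M : Finset (Sym2 W) => if IsMatchingOn G F M then M.card else 0)

lemma card_le_nuOn {W : Type*} [Fintype W] [DecidableEq W] {G : SimpleGraph W}
    {F : Finset W} {M : Finset (Sym2 W)} (h : IsMatchingOn G F M) :
    M.card ≤ nuOn G F := by
  classical
  have h2 := Finset.le_sup
    (f := fun M : Finset (Sym2 W) => if IsMatchingOn G F M then M.card else 0)
    (Finset.mem_univ M)
  rw [if_pos h] at h2
  exact h2

lemma exists_nuOn_matching {W : Type*} [Fintype W] [DecidableEq W]
    (G : SimpleGraph W) (F : Finset W) :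
    ∃ M, IsMatchingOn G F M ∧ M.card = nuOn G F := by
  classical
  obtain ⟨M, -, hM⟩ := Finset.exists_mem_eq_sup (Finset.univ : Finset (Finset (Sym2 W)))
    ⟨∅, Finset.mem_univ ∅⟩
    (fun M : Finset (Sym2 W) => if IsMatchingOn G F M then M.card else 0)
  by_cases h : IsMatchingOn G F M
  · refine ⟨M, h, ?_⟩
    have h2 : nuOn G F = if IsMatchingOn G F M then M.card else 0 := hM
    rw [if_pos h] at h2
    exact h2.symm
  · refine ⟨∅, isMatchingOn_empty _ _, ?_⟩
    have h2 : nuOn G F = if IsMatchingOn G F M then M.card else 0 := hM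
    rw [if_neg h] at h2
    simp [h2]

lemma mFFace_iff_nuOn_lt {W : Type*} [Fintype W] [DecidableEq W]
    {G : SimpleGraph W} {F : Finset W} {q : ℕ} :
    MFFace G q F ↔ nuOn G F < q := by
  constructor
  · intro hface
    by_contra hlt
    push_neg at hlt
    obtain ⟨M, hM, hcard⟩ := exists_nuOn_matching G F
    obtain ⟨N, hNM, hN⟩ := Finset.exists_subset_card_eq (n := q) (by omega : q ≤ M.card)
    exact hface ⟨N, isMatchingOn_subset hM hNM, hN⟩
  · rintro hlt ⟨M, hM, hcard⟩
    have := card_le_nuOn hM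
    omega

end Aux

section Aux2

open Finset

variable {V : Type*} [Fintype V] [DecidableEq V] {H : SimpleGraph V}

lemma whisker_adj_inl_inr {a b : V} : (whisker H).Adj (Sum.inl a) (Sum.inr b) ↔ a = b := by
  constructor
  · rintro (⟨x, y, hx, hy, -⟩ | ⟨x, ⟨hx, hy⟩ | ⟨hx, hy⟩⟩)
    · exact absurd hy (by simp)
    · rw [Sum.inl.injEq] at hx
      rw [Sum.inr.injEq] at hy
      exact hx.trans hy.symm
    · exact absurd hx (by simp)
  · rintro rfl
    exact Or.inr ⟨a, Or.inl ⟨rfl, rfl⟩⟩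

lemma whisker_adj_inl_inl {a b : V} : (whisker H).Adj (Sum.inl a) (Sum.inl b) ↔ H.Adj a b := by
  constructor
  · rintro (⟨x, y, hx, hy, hadj⟩ | ⟨x, ⟨hx, hy⟩ | ⟨hx, hy⟩⟩)
    · rw [Sum.inl.injEq] at hx hy
      rwa [hx, hy]
    · exact absurd hy (by simp)
    · exact absurd hx (by simp)
  · intro h
    exact Or.inl ⟨a, b, rfl, rfl, h⟩

lemma whisker_adj_inr_inr {a b : V} : ¬ (whisker H).Adj (Sum.inr a) (Sum.inr b) := by
  rintro (⟨x, y, hx, hy, -⟩ | ⟨x, ⟨hx, hy⟩ | ⟨hx, hy⟩⟩) <;> simp_all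

lemma whisker_edge_form {e : Sym2 (V ⊕ V)} (he : e ∈ (whisker H).edgeSet) :
    (∃ a b, H.Adj a b ∧ e = s(Sum.inl a, Sum.inl b)) ∨ (∃ a, e = s(Sum.inl a, Sum.inr a)) := by
  obtain ⟨x, y, rfl⟩ := sym2_exists_rep e
  rw [SimpleGraph.mem_edgeSet] at he
  match x, y with
  | Sum.inl a, Sum.inl b => exact Or.inl ⟨a, b, whisker_adj_inl_inl.1 he, rfl⟩
  | Sum.inl a, Sum.inr b =>
      have hab : a = b := whisker_adj_inl_inr.1 he
      subst hab
      exact Or.inr ⟨a, rfl⟩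
  | Sum.inr a, Sum.inl b =>
      have hab : b = a := whisker_adj_inl_inr.1 he.symm
      subst hab
      exact Or.inr ⟨b, Sym2.eq_swap⟩
  | Sum.inr a, Sum.inr b => exact absurd he whisker_adj_inr_inr

/-- The facet candidate determined by `(P, D)`. -/
def Fset (P D : Finset V) : Finset (V ⊕ V) :=
  ((P ∪ D).image Sum.inl) ∪ ((Dᶜ).image Sum.inr)

lemma mem_Fset_inl {P D : Finset V} {a : V} : Sum.inl a ∈ Fset P D ↔ a ∈ P ∪ D := by
  simp [Fset]

lemma mem_Fset_inr {P D : Finset V} {b : V} : Sum.inr b ∈ Fset P D ↔ b ∉ D := by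
  simp [Fset]

lemma card_Fset (P D : Finset V) :
    (Fset P D).card = (P ∪ D).card + (Fintype.card V - D.card) := by
  rw [Fset, Finset.card_union_of_disjoint, Finset.card_image_of_injective _ Sum.inl_injective,
    Finset.card_image_of_injective _ Sum.inr_injective, Finset.card_compl]
  simp only [Finset.disjoint_left, Finset.mem_image]
  rintro x ⟨a, -, rfl⟩ ⟨b, -, h⟩
  exact Sum.inr_ne_inl h

/-- The pendant (whisker-edge) matching over an index set. -/
def pendants (S : Finset V) : Finset (Sym2 (V ⊕ V)) :=
  S.image fun p => s(Sum.inl p, Sum.inr p)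

lemma mem_pendants {S : Finset V} {e : Sym2 (V ⊕ V)} :
    e ∈ pendants S ↔ ∃ p ∈ S, e = s(Sum.inl p, Sum.inr p) := by
  simp [pendants, eq_comm]

lemma card_pendants (S : Finset V) : (pendants S).card = S.card := by
  rw [pendants, Finset.card_image_of_injective]
  intro a b hab
  rw [Sym2.eq_iff] at hab
  rcases hab with ⟨h1, -⟩ | ⟨h1, -⟩
  · exact Sum.inl_injective h1
  · exact absurd h1 (by simp)

lemma pendants_isMatchingOn {S : Finset V} {F : Finset (V ⊕ V)}
    (h : ∀ p ∈ S, Sum.inl p ∈ F ∧ Sum.inr p ∈ F) :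
    IsMatchingOn (whisker H) F (pendants S) := by
  refine ⟨?_, ?_, ?_⟩
  · intro e he
    obtain ⟨p, -, rfl⟩ := mem_pendants.1 he
    exact ((whisker H).mem_edgeSet).2 (whisker_adj_inl_inr.2 rfl)
  · intro e he v hv
    obtain ⟨p, hp, rfl⟩ := mem_pendants.1 he
    rcases Sym2.mem_iff.1 hv with rfl | rfl
    · exact (h p hp).1
    · exact (h p hp).2
  · intro e he e' he' hne v hv hv'
    obtain ⟨p, hp, rfl⟩ := mem_pendants.1 he
    obtain ⟨p', hp', rfl⟩ := mem_pendants.1 he'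
    have hpp : p ≠ p' := fun hh => hne (by rw [hh])
    rcases Sym2.mem_iff.1 hv with rfl | rfl <;>
      rcases Sym2.mem_iff.1 hv' with h1 | h1 <;> simp_all

end Aux2

section Aux3

open Finset

variable {V : Type*} [Fintype V] [DecidableEq V] {H : SimpleGraph V}

/-- Vertex set with `x`-part `A` and `y`-part `B`. -/
def FAB (A B : Finset V) : Finset (V ⊕ V) :=
  (A.image Sum.inl) ∪ (B.image Sum.inr)

lemma mem_FAB_inl {A B : Finset V} {a : V} : Sum.inl a ∈ FAB A B ↔ a ∈ A := by
  simp [FAB]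

lemma mem_FAB_inr {A B : Finset V} {b : V} : Sum.inr b ∈ FAB A B ↔ b ∈ B := by
  simp [FAB]

lemma Fset_eq_FAB (P D : Finset V) : Fset P D = FAB (P ∪ D) Dᶜ := rfl

lemma matching_edge_form {A B : Finset V} {M : Finset (Sym2 (V ⊕ V))}
    (hM : IsMatchingOn (whisker H) (FAB A B) M) {e : Sym2 (V ⊕ V)} (he : e ∈ M) :
    (∃ a b, a ∈ A ∧ b ∈ A ∧ H.Adj a b ∧ e = s(Sum.inl a, Sum.inl b)) ∨
    (∃ p, p ∈ A ∧ p ∈ B ∧ e = s(Sum.inl p, Sum.inr p)) := by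
  rcases whisker_edge_form (hM.1 e he) with ⟨a, b, hab, rfl⟩ | ⟨p, rfl⟩
  · refine Or.inl ⟨a, b, ?_, ?_, hab, rfl⟩
    · exact mem_FAB_inl.1 (hM.2.1 _ he _ (by simp))
    · exact mem_FAB_inl.1 (hM.2.1 _ he _ (by simp))
  · refine Or.inr ⟨p, ?_, ?_, rfl⟩
    · exact mem_FAB_inl.1 (hM.2.1 _ he _ (by simp))
    · exact mem_FAB_inr.1 (hM.2.1 _ he _ (by simp))

lemma nuOn_FAB_le [Nonempty V] (A B : Finset V) :
    nuOn (whisker H) (FAB A B) ≤ (A ∩ B).card + nuOn H (A \ B) := by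
  classical
  obtain ⟨M, hM, hcard⟩ := exists_nuOn_matching (whisker H) (FAB A B)
  rw [← hcard]
  set P := A ∩ B with hP
  set M1 := M.filter (fun e => ∃ p ∈ P, Sum.inl p ∈ e) with hM1
  set M2 := M.filter (fun e => ¬ ∃ p ∈ P, Sum.inl p ∈ e) with hM2
  have hsplit : M1.card + M2.card = M.card :=
    Finset.card_filter_add_card_filter_not _
  have h1 : M1.card ≤ P.card := by
    apply Finset.card_le_card_of_injOn
      (fun e => if h : ∃ p ∈ P, Sum.inl p ∈ e then h.choose else Classical.arbitrary V)
    · intro e he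
      have h : ∃ p ∈ P, Sum.inl p ∈ e := (Finset.mem_filter.1 he).2
      simp only [dif_pos h]
      exact h.choose_spec.1
    · intro e he e' he' heq
      by_contra hne
      have h : ∃ p ∈ P, Sum.inl p ∈ e := (Finset.mem_filter.1 he).2
      have h' : ∃ p ∈ P, Sum.inl p ∈ e' := (Finset.mem_filter.1 he').2
      simp only [dif_pos h, dif_pos h'] at heq
      exact hM.2.2 e (Finset.mem_filter.1 he).1 e' (Finset.mem_filter.1 he').1 hne
        _ h.choose_spec.2 (heq ▸ h'.choose_spec.2)
  -- each edge of M2 has the `inl`–`inl` form with endpoints in `A \ B`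
  have hform : ∀ e ∈ M2, ∃ a b, a ∈ A \ B ∧ b ∈ A \ B ∧ H.Adj a b ∧
      e = s(Sum.inl a, Sum.inl b) := by
    intro e he
    have heM : e ∈ M := (Finset.mem_filter.1 he).1
    have hnot : ¬ ∃ p ∈ P, Sum.inl p ∈ e := (Finset.mem_filter.1 he).2
    rcases matching_edge_form hM heM with ⟨a, b, ha, hb, hab, rfl⟩ | ⟨p, hpA, hpB, rfl⟩
    · have haB : a ∉ B := fun haB => hnot ⟨a, by simp [hP, ha, haB], by simp⟩
      have hbB : b ∉ B := fun hbB => hnot ⟨b, by simp [hP, hb, hbB], by simp⟩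
      exact ⟨a, b, by simp [ha, haB], by simp [hb, hbB], hab, rfl⟩
    · exact absurd ⟨p, by simp [hP, hpA, hpB], by simp⟩ hnot
  set N := M2.image (Sym2.map (Sum.elim id id)) with hN
  have hNcard : N.card = M2.card := by
    apply Finset.card_image_of_injOn
    intro e he e' he' heq
    obtain ⟨a, b, ha, hb, hab, rfl⟩ := hform e he
    obtain ⟨a', b', ha', hb', hab', rfl⟩ := hform e' he'
    simp only [Sym2.map_pair_eq, Sum.elim_inl, id_eq] at heq
    rw [Sym2.eq_iff] at heq ⊢
    rcases heq with ⟨rfl, rfl⟩ | ⟨rfl, rfl⟩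
    · exact Or.inl ⟨rfl, rfl⟩
    · exact Or.inr ⟨rfl, rfl⟩
  have hNmatch : IsMatchingOn H (A \ B) N := by
    refine ⟨?_, ?_, ?_⟩
    · intro f hf
      obtain ⟨e, he, rfl⟩ := Finset.mem_image.1 hf
      obtain ⟨a, b, ha, hb, hab, rfl⟩ := hform e he
      simpa [Sym2.map_pair_eq] using hab
    · intro f hf v hv
      obtain ⟨e, he, rfl⟩ := Finset.mem_image.1 hf
      obtain ⟨a, b, ha, hb, hab, rfl⟩ := hform e he
      simp only [Sym2.map_pair_eq, Sum.elim_inl, id_eq, Sym2.mem_iff] at hv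
      rcases hv with rfl | rfl
      · exact ha
      · exact hb
    · intro f hf f' hf' hne v hv hv'
      obtain ⟨e, he, rfl⟩ := Finset.mem_image.1 hf
      obtain ⟨e', he', rfl⟩ := Finset.mem_image.1 hf'
      obtain ⟨a, b, ha, hb, hab, rfl⟩ := hform e he
      obtain ⟨a', b', ha', hb', hab', rfl⟩ := hform e' he'
      have hee : s(Sum.inl a, Sum.inl b) ≠ s(Sum.inl a', Sum.inl b') := fun hh => hne (by rw [hh])
      simp only [Sym2.map_pair_eq, Sum.elim_inl, id_eq, Sym2.mem_iff] at hv hv'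
      apply hM.2.2 _ (Finset.mem_filter.1 he).1 _ (Finset.mem_filter.1 he').1 hee (Sum.inl v)
      · rcases hv with rfl | rfl <;> simp
      · rcases hv' with rfl | rfl <;> simp
  calc M.card = M1.card + M2.card := hsplit.symm
    _ ≤ P.card + nuOn H (A \ B) := by
        have := card_le_nuOn hNmatch
        omega

lemma nuOn_FAB_ge (A B : Finset V) :
    (A ∩ B).card + nuOn H (A \ B) ≤ nuOn (whisker H) (FAB A B) := by
  classical
  obtain ⟨N, hN, hNcard⟩ := exists_nuOn_matching H (A \ B)
  have hform : ∀ f ∈ N, ∃ a b, a ∈ A \ B ∧ b ∈ A \ B ∧ H.Adj a b ∧ f = s(a, b) := by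
    intro f hf
    obtain ⟨a, b, rfl⟩ := sym2_exists_rep f
    exact ⟨a, b, hN.2.1 _ hf _ (by simp), hN.2.1 _ hf _ (by simp),
      (H.mem_edgeSet).1 (hN.1 _ hf), rfl⟩
  set M := pendants (A ∩ B) ∪ N.image (Sym2.map Sum.inl) with hMdef
  have hdisj : Disjoint (pendants (A ∩ B)) (N.image (Sym2.map Sum.inl)) := by
    rw [Finset.disjoint_left]
    rintro e he hf
    obtain ⟨p, hp, rfl⟩ := mem_pendants.1 he
    obtain ⟨f, hfN, heq⟩ := Finset.mem_image.1 hf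
    obtain ⟨a, b, ha, hb, hab, rfl⟩ := hform f hfN
    rw [Sym2.map_pair_eq] at heq
    rw [Sym2.eq_iff] at heq
    rcases heq with ⟨-, h2⟩ | ⟨h2, -⟩ <;> exact Sum.inl_ne_inr h2
  have hMcard : M.card = (A ∩ B).card + N.card := by
    rw [hMdef, Finset.card_union_of_disjoint hdisj, card_pendants,
      Finset.card_image_of_injOn (Sym2.map.injective Sum.inl_injective).injOn]
  have hMmatch : IsMatchingOn (whisker H) (FAB A B) M := by
    refine ⟨?_, ?_, ?_⟩
    · intro e he
      rcases Finset.mem_union.1 he with he | he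
      · obtain ⟨p, hp, rfl⟩ := mem_pendants.1 he
        exact ((whisker H).mem_edgeSet).2 (whisker_adj_inl_inr.2 rfl)
      · obtain ⟨f, hfN, rfl⟩ := Finset.mem_image.1 he
        obtain ⟨a, b, ha, hb, hab, rfl⟩ := hform f hfN
        rw [Sym2.map_pair_eq]
        exact ((whisker H).mem_edgeSet).2 (whisker_adj_inl_inl.2 hab)
    · intro e he v hv
      rcases Finset.mem_union.1 he with he | he
      · obtain ⟨p, hp, rfl⟩ := mem_pendants.1 he
        rcases Sym2.mem_iff.1 hv with rfl | rfl
        · exact mem_FAB_inl.2 (Finset.mem_inter.1 hp).1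
        · exact mem_FAB_inr.2 (Finset.mem_inter.1 hp).2
      · obtain ⟨f, hfN, rfl⟩ := Finset.mem_image.1 he
        obtain ⟨a, b, ha, hb, hab, rfl⟩ := hform f hfN
        rw [Sym2.map_pair_eq] at hv
        rcases Sym2.mem_iff.1 hv with rfl | rfl
        · exact mem_FAB_inl.2 (Finset.mem_sdiff.1 ha).1
        · exact mem_FAB_inl.2 (Finset.mem_sdiff.1 hb).1
    · intro e he e' he' hne v hv hv'
      rcases Finset.mem_union.1 he with he | he <;> rcases Finset.mem_union.1 he' with he' | he'
      · obtain ⟨p, hp, rfl⟩ := mem_pendants.1 he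
        obtain ⟨p', hp', rfl⟩ := mem_pendants.1 he'
        have hpp : p ≠ p' := fun hh => hne (by rw [hh])
        rcases Sym2.mem_iff.1 hv with rfl | rfl <;>
          rcases Sym2.mem_iff.1 hv' with h1 | h1 <;> simp_all
      · obtain ⟨p, hp, rfl⟩ := mem_pendants.1 he
        obtain ⟨f, hfN, rfl⟩ := Finset.mem_image.1 he'
        obtain ⟨a, b, ha, hb, hab, rfl⟩ := hform f hfN
        rw [Sym2.map_pair_eq] at hv'
        have hpB := (Finset.mem_inter.1 hp).2
        rcases Sym2.mem_iff.1 hv with rfl | rfl <;>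
          rcases Sym2.mem_iff.1 hv' with h1 | h1 <;>
            first
              | (exact Sum.inl_ne_inr h1.symm)
              | (rw [Sum.inl.injEq] at h1; subst h1
                 first
                   | exact absurd hpB (Finset.mem_sdiff.1 ha).2
                   | exact absurd hpB (Finset.mem_sdiff.1 hb).2)
      · obtain ⟨p, hp, rfl⟩ := mem_pendants.1 he'
        obtain ⟨f, hfN, rfl⟩ := Finset.mem_image.1 he
        obtain ⟨a, b, ha, hb, hab, rfl⟩ := hform f hfN
        rw [Sym2.map_pair_eq] at hv
        have hpB := (Finset.mem_inter.1 hp).2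
        rcases Sym2.mem_iff.1 hv' with rfl | rfl <;>
          rcases Sym2.mem_iff.1 hv with h1 | h1 <;>
            first
              | (exact Sum.inl_ne_inr h1.symm)
              | (rw [Sum.inl.injEq] at h1; subst h1
                 first
                   | exact absurd hpB (Finset.mem_sdiff.1 ha).2
                   | exact absurd hpB (Finset.mem_sdiff.1 hb).2)
      · obtain ⟨f, hfN, rfl⟩ := Finset.mem_image.1 he
        obtain ⟨f', hfN', rfl⟩ := Finset.mem_image.1 he'
        have hff : f ≠ f' := fun hh => hne (by rw [hh])
        obtain ⟨u, hu, rfl⟩ := Sym2.mem_map.1 hv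
        obtain ⟨u', hu', heq⟩ := Sym2.mem_map.1 hv'
        obtain rfl : u = u' := Sum.inl_injective heq.symm
        exact hN.2.2 f hfN f' hfN' hff u hu hu'
  have := card_le_nuOn hMmatch
  omega

lemma nuOn_FAB [Nonempty V] (A B : Finset V) :
    nuOn (whisker H) (FAB A B) = (A ∩ B).card + nuOn H (A \ B) :=
  le_antisymm (nuOn_FAB_le A B) (nuOn_FAB_ge A B)

end Aux3

section Aux4

open Finset SimpleGraph

variable {V : Type*} [Fintype V] [DecidableEq V] {H : SimpleGraph V} [DecidableRel H.Adj]

/-- In a finite forest, every nonempty vertex set contains a vertex with at most one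
neighbour inside the set. -/
lemma exists_low_degree (hH : H.IsAcyclic) (S : Finset V) (hS : S.Nonempty) :
    ∃ v ∈ S, (S.filter (H.Adj v)).card ≤ 1 := by
  classical
  obtain ⟨v0, hv0⟩ := hS
  set P : ℕ → Prop := fun ℓ => ∃ (u w : V) (p : H.Walk u w), p.IsPath ∧
    (∀ x ∈ p.support, x ∈ S) ∧ p.length = ℓ with hPdef
  have hP0 : P 0 := ⟨v0, v0, Walk.nil, by simp, by simp [hv0], rfl⟩
  have hbound : ∀ ℓ, P ℓ → ℓ ≤ Fintype.card V := by
    rintro ℓ ⟨u, w, p, hp, -, hl⟩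
    have := hp.length_lt
    omega
  set L := Nat.findGreatest P (Fintype.card V) with hL
  have hPL : P L := Nat.findGreatest_spec (hbound 0 hP0) hP0
  obtain ⟨u, w, p, hp, hsupp, hlen⟩ := hPL
  refine ⟨u, hsupp u p.start_mem_support, ?_⟩
  have key : ∀ c ∈ S.filter (H.Adj u), c = p.getVert 1 := by
    intro c hc
    obtain ⟨hcS, hadj⟩ := Finset.mem_filter.1 hc
    by_cases hcsup : c ∈ p.support
    · have hq := hp.takeUntil hcsup
      have huniq := hH.path_unique ⟨p.takeUntil c hcsup, hq⟩ (Path.singleton hadj)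
      have htake : p.takeUntil c hcsup = Walk.cons hadj Walk.nil := by
        simpa [Path.singleton] using congrArg Subtype.val huniq
      have hspec := p.take_spec hcsup
      rw [htake] at hspec
      rw [← hspec]
      simp [Walk.getVert_cons_succ]
    · have hext : (Walk.cons hadj.symm p).IsPath := (Walk.cons_isPath_iff _ _).2 ⟨hp, hcsup⟩
      have hPL1 : P (L + 1) := by
        refine ⟨c, w, Walk.cons hadj.symm p, hext, ?_, by simp [hlen]⟩
        intro x hx
        rw [Walk.support_cons] at hx
        rcases List.mem_cons.1 hx with rfl | hx
        · exact hcS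
        · exact hsupp x hx
      have := Nat.le_findGreatest (hbound _ hPL1) hPL1
      omega
  exact Finset.card_le_one.2 (fun a ha b hb => (key a ha).trans (key b hb).symm)

lemma elim_weights_on (hH : H.IsAcyclic) :
    ∀ (n : ℕ) (S : Finset V), S.card = n → ∃ wt : V → ℕ, Set.InjOn wt S ∧
      (∀ v ∈ S, wt v < n) ∧
      ∀ v ∈ S, (S.filter (fun u => H.Adj v u ∧ wt u < wt v)).card ≤ 1 := by
  classical
  intro n
  induction n with
  | zero =>
      intro S h
      rw [Finset.card_eq_zero] at h
      subst h
      exact ⟨fun _ => 0, by simp [Set.InjOn], by simp, by simp⟩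
  | succ n ih =>
      intro S hS
      obtain ⟨v, hvS, hdeg⟩ := exists_low_degree hH S (Finset.card_pos.1 (by omega))
      obtain ⟨wt', hinj, hlt, hgood⟩ := ih (S.erase v)
        (by rw [Finset.card_erase_of_mem hvS]; omega)
      refine ⟨Function.update wt' v n, ?_, ?_, ?_⟩
      · intro a ha b hb hab
        by_cases hav : a = v <;> by_cases hbv : b = v
        · rw [hav, hbv]
        · rw [hav, Function.update_self] at hab
          rw [Function.update_of_ne hbv] at hab
          have := hlt b (Finset.mem_erase.2 ⟨hbv, hb⟩)
          omega
        · rw [hbv, Function.update_self] at hab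
          rw [Function.update_of_ne hav] at hab
          have := hlt a (Finset.mem_erase.2 ⟨hav, ha⟩)
          omega
        · rw [Function.update_of_ne hav, Function.update_of_ne hbv] at hab
          exact hinj (Finset.mem_coe.2 (Finset.mem_erase.2 ⟨hav, ha⟩))
            (Finset.mem_coe.2 (Finset.mem_erase.2 ⟨hbv, hb⟩)) hab
      · intro x hx
        by_cases hxv : x = v
        · rw [hxv, Function.update_self]; omega
        · rw [Function.update_of_ne hxv]
          have := hlt x (Finset.mem_erase.2 ⟨hxv, hx⟩)
          omega
      · intro x hx
        by_cases hxv : x = v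
        · subst hxv
          refine le_trans (Finset.card_le_card ?_) hdeg
          intro y hy
          obtain ⟨hyS, hadj, -⟩ := Finset.mem_filter.1 hy
          exact Finset.mem_filter.2 ⟨hyS, hadj⟩
        · refine le_trans (Finset.card_le_card ?_) (hgood x (Finset.mem_erase.2 ⟨hxv, hx⟩))
          intro y hy
          obtain ⟨hyS, hadj, hlt2⟩ := Finset.mem_filter.1 hy
          have hyv : y ≠ v := by
            rintro rfl
            rw [Function.update_self, Function.update_of_ne hxv] at hlt2
            have := hlt x (Finset.mem_erase.2 ⟨hxv, hx⟩)
            omega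
          refine Finset.mem_filter.2 ⟨Finset.mem_erase.2 ⟨hyv, hyS⟩, hadj, ?_⟩
          rwa [Function.update_of_ne hyv, Function.update_of_ne hxv] at hlt2

/-- An elimination weighting of a finite forest: injective, bounded by `card V`, and
every vertex has at most one neighbour of smaller weight. -/
lemma exists_elim_weights (hH : H.IsAcyclic) :
    ∃ wt : V → ℕ, Function.Injective wt ∧ (∀ v, wt v < Fintype.card V + 1) ∧
      ∀ v, ((Finset.univ.filter (fun u => H.Adj v u ∧ wt u < wt v)).card ≤ 1) := by
  obtain ⟨wt, hinj, hlt, hgood⟩ := elim_weights_on hH (Fintype.card V) Finset.univ rfl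
  refine ⟨wt, fun a b hab => hinj (by simp) (by simp) hab, fun v => ?_, fun v => hgood v (by simp)⟩
  have := hlt v (by simp)
  omega

/-- Binary-encoding key of a finset of vertices. -/
def skey (wt : V → ℕ) (S : Finset V) : ℕ := S.sum fun v => 2 ^ (wt v)

lemma sum_range_two_pow_lt (m : ℕ) : (Finset.range m).sum (fun j => 2 ^ j) < 2 ^ m := by
  induction m with
  | zero => simp
  | succ m ih =>
      rw [Finset.sum_range_succ, pow_succ]
      omega

lemma skey_lt_pow {wt : V → ℕ} (hinj : Function.Injective wt) {S : Finset V} {m : ℕ}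
    (hbd : ∀ v ∈ S, wt v < m) : skey wt S < 2 ^ m := by
  classical
  have h1 : skey wt S = (S.image wt).sum (fun j => 2 ^ j) :=
    (Finset.sum_image (fun x _ y _ h => hinj h)).symm
  have h2 : S.image wt ⊆ Finset.range m := by
    intro j hj
    obtain ⟨x, hx, rfl⟩ := Finset.mem_image.1 hj
    exact Finset.mem_range.2 (hbd x hx)
  calc skey wt S ≤ (Finset.range m).sum (fun j => 2 ^ j) := by
        rw [h1]; exact Finset.sum_le_sum_of_subset h2
    _ < 2 ^ m := sum_range_two_pow_lt m

/-- Binary comparison: if the maximal-weight element of the symmetric difference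
belongs to `T`, then `skey S < skey T`. -/
lemma skey_lt_skey {wt : V → ℕ} (hinj : Function.Injective wt) {S T : Finset V} {mx : V}
    (hmT : mx ∈ T) (hmS : mx ∉ S)
    (hmax : ∀ x, ((x ∈ S ∧ x ∉ T) ∨ (x ∈ T ∧ x ∉ S)) → x ≠ mx → wt x < wt mx) :
    skey wt S < skey wt T := by
  classical
  have hS : skey wt (S ∩ T) + skey wt (S \ T) = skey wt S :=
    Finset.sum_inter_add_sum_sdiff S T _
  have hT : skey wt (T ∩ S) + skey wt (T \ S) = skey wt T :=
    Finset.sum_inter_add_sum_sdiff T S _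
  rw [Finset.inter_comm T S] at hT
  have h1 : skey wt (S \ T) < 2 ^ (wt mx) := by
    apply skey_lt_pow hinj
    intro v hv
    obtain ⟨hvS, hvT⟩ := Finset.mem_sdiff.1 hv
    exact hmax v (Or.inl ⟨hvS, hvT⟩) (fun hh => hmS (hh ▸ hvS))
  have h2 : 2 ^ (wt mx) ≤ skey wt (T \ S) :=
    Finset.single_le_sum (f := fun v => 2 ^ (wt v)) (fun i _ => Nat.zero_le _)
      (Finset.mem_sdiff.2 ⟨hmT, hmS⟩)
  omega

end Aux4

section Aux5

open Finset

variable {V : Type*} [Fintype V] [DecidableEq V] {H : SimpleGraph V}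

lemma nuOn_mono {W : Type*} [Fintype W] [DecidableEq W] {G : SimpleGraph W}
    {F F' : Finset W} (h : F ⊆ F') : nuOn G F ≤ nuOn G F' := by
  obtain ⟨M, hM, hc⟩ := exists_nuOn_matching G F
  rw [← hc]
  exact card_le_nuOn (isMatchingOn_mono hM h)

lemma matching_on_Fset_card_le [Nonempty V] {P D : Finset V}
    (hD : ∀ a ∈ D, ∀ b ∈ D, ¬H.Adj a b) {M : Finset (Sym2 (V ⊕ V))}
    (hM : IsMatchingOn (whisker H) (Fset P D) M) : M.card ≤ P.card := by
  classical
  rw [Fset_eq_FAB] at hM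
  have hcov : ∀ e ∈ M, ∃ p ∈ P, Sum.inl p ∈ e := by
    intro e he
    rcases matching_edge_form hM he with ⟨a, b, ha, hb, hab, rfl⟩ | ⟨p, hp, hp2, rfl⟩
    · rcases Finset.mem_union.1 ha with haP | haD
      · exact ⟨a, haP, by simp⟩
      · rcases Finset.mem_union.1 hb with hbP | hbD
        · exact ⟨b, hbP, by simp⟩
        · exact absurd hab (hD a haD b hbD)
    · rcases Finset.mem_union.1 hp with hpP | hpD
      · exact ⟨p, hpP, by simp⟩
      · exact absurd hpD (by simpa using hp2)
  apply Finset.card_le_card_of_injOn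
    (fun e => if h : ∃ p ∈ P, Sum.inl p ∈ e then h.choose else Classical.arbitrary V)
  · intro e he
    have h := hcov e he
    simp only [dif_pos h]
    exact h.choose_spec.1
  · intro e he e' he' heq
    by_contra hne
    have h := hcov e he
    have h' := hcov e' he'
    simp only [dif_pos h, dif_pos h'] at heq
    exact hM.2.2 e he e' he' hne _ h.choose_spec.2 (heq ▸ h'.choose_spec.2)

/-- Easy direction: every `Fset P D` with `|P| = q-1`, `P ∩ D = ∅`, `D` independent,
is a facet of `MF^q(whisker H)`. -/
lemma isFacet_Fset [Nonempty V] {P D : Finset V} {q : ℕ}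
    (hq : P.card + 1 = q) (hPD : Disjoint P D)
    (hD : ∀ a ∈ D, ∀ b ∈ D, ¬H.Adj a b) :
    IsFacet (MFFace (whisker H) q) (Fset P D) := by
  classical
  constructor
  · rw [mFFace_iff_nuOn_lt]
    obtain ⟨M, hM, hc⟩ := exists_nuOn_matching (whisker H) (Fset P D)
    have := matching_on_Fset_card_le hD hM
    omega
  · intro F' hF' hsub
    by_contra hne
    obtain ⟨z, hzF', hzF⟩ := Finset.exists_of_ssubset (lt_of_le_of_ne hsub hne)
    match z with
    | Sum.inl j =>
        have hjPD : j ∉ P ∪ D := fun hj => hzF (mem_Fset_inl.2 hj)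
        have hmatch : IsMatchingOn (whisker H) F' (pendants (insert j P)) := by
          apply pendants_isMatchingOn
          intro p hp
          rcases Finset.mem_insert.1 hp with rfl | hpP
          · refine ⟨hzF', hsub (mem_Fset_inr.2 ?_)⟩
            intro hjD
            exact hjPD (Finset.mem_union_right _ hjD)
          · exact ⟨hsub (mem_Fset_inl.2 (Finset.mem_union_left _ hpP)),
              hsub (mem_Fset_inr.2 (fun hpD => (Finset.disjoint_left.1 hPD) hpP hpD))⟩
        refine hF' ⟨pendants (insert j P), hmatch, ?_⟩
        rw [card_pendants, Finset.card_insert_of_notMem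
          (fun hjP => hjPD (Finset.mem_union_left _ hjP))]
        omega
    | Sum.inr d =>
        have hdD : d ∈ D := by
          by_contra hdD
          exact hzF (mem_Fset_inr.2 hdD)
        have hmatch : IsMatchingOn (whisker H) F' (pendants (insert d P)) := by
          apply pendants_isMatchingOn
          intro p hp
          rcases Finset.mem_insert.1 hp with rfl | hpP
          · exact ⟨hsub (mem_Fset_inl.2 (Finset.mem_union_right _ hdD)), hzF'⟩
          · exact ⟨hsub (mem_Fset_inl.2 (Finset.mem_union_left _ hpP)),
              hsub (mem_Fset_inr.2 (fun hpD => (Finset.disjoint_left.1 hPD) hpP hpD))⟩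
        refine hF' ⟨pendants (insert d P), hmatch, ?_⟩
        rw [card_pendants, Finset.card_insert_of_notMem
          (fun hdP => (Finset.disjoint_left.1 hPD) hdP hdD)]
        omega

/-- Hard direction: every facet of `MF^q(whisker H)` is an `Fset P D`. -/
lemma facet_structure [Nonempty V] (hH : H.IsAcyclic) {q : ℕ} (hq1 : 1 ≤ q)
    (hqn : q ≤ Fintype.card V) {F : Finset (V ⊕ V)}
    (hF : IsFacet (MFFace (whisker H) q) F) :
    ∃ P D : Finset V, P.card + 1 = q ∧ Disjoint P D ∧
      (∀ a ∈ D, ∀ b ∈ D, ¬H.Adj a b) ∧ F = Fset P D := by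
  classical
  obtain ⟨hface, hmax⟩ := hF
  set A := Finset.univ.filter (fun a => Sum.inl a ∈ F) with hA
  set B := Finset.univ.filter (fun b => Sum.inr b ∈ F) with hB
  have hmemA : ∀ a : V, Sum.inl a ∈ F ↔ a ∈ A := by intro a; simp [hA]
  have hmemB : ∀ b : V, Sum.inr b ∈ F ↔ b ∈ B := by intro b; simp [hB]
  have hFAB : F = FAB A B := by
    ext z
    match z with
    | Sum.inl a => rw [mem_FAB_inl, hmemA]
    | Sum.inr b => rw [mem_FAB_inr, hmemB]
  -- Step 1 : Aᶜ ⊆ B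
  have hAcB : ∀ j, j ∉ A → j ∈ B := by
    intro j hjA
    by_contra hjB
    have hface' : MFFace (whisker H) q (insert (Sum.inr j) F) := by
      rintro ⟨M, hM, hMc⟩
      apply hface
      refine ⟨M, ⟨hM.1, ?_, hM.2.2⟩, hMc⟩
      intro e he v hv
      have hvF' := hM.2.1 e he v hv
      rcases Finset.mem_insert.1 hvF' with rfl | hvF
      · exfalso
        rcases whisker_edge_form (hM.1 e he) with ⟨a, b, hab, rfl⟩ | ⟨a, rfl⟩
        · rcases Sym2.mem_iff.1 hv with h1 | h1
          · exact Sum.inr_ne_inl h1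
          · exact Sum.inr_ne_inl h1
        · have hj : a = j := by
            rcases Sym2.mem_iff.1 hv with h1 | h1
            · exact absurd h1 Sum.inr_ne_inl
            · exact Sum.inr_injective h1.symm
          subst hj
          have : Sum.inl a ∈ insert (Sum.inr a) F := hM.2.1 _ he _ (by simp)
          rcases Finset.mem_insert.1 this with h1 | h1
          · exact absurd h1 (by simp)
          · exact hjA ((hmemA a).1 h1)
      · exact hvF
    have := hmax _ hface' (Finset.subset_insert _ _)
    have : Sum.inr j ∈ F := this ▸ Finset.mem_insert_self _ _
    exact hjB ((hmemB j).1 this)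
  set P := A ∩ B with hP
  set D := A \ B with hD2
  have hBD : B = Dᶜ := by
    ext b
    simp only [hD2, Finset.mem_compl, Finset.mem_sdiff, not_and, not_not]
    constructor
    · intro hbB _; exact hbB
    · intro hb
      by_cases hbA : b ∈ A
      · exact hb hbA
      · exact hAcB b hbA
  have hPD : Disjoint P D := by
    rw [Finset.disjoint_left]
    intro x hxP hxD
    exact (Finset.mem_sdiff.1 hxD).2 (Finset.mem_inter.1 hxP).2
  have hPuD : P ∪ D = A := by
    ext x
    simp only [hP, hD2, Finset.mem_union, Finset.mem_inter, Finset.mem_sdiff]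
    constructor
    · rintro (⟨h1, -⟩ | ⟨h1, -⟩) <;> exact h1
    · intro hx
      by_cases hxB : x ∈ B
      · exact Or.inl ⟨hx, hxB⟩
      · exact Or.inr ⟨hx, hxB⟩
  have hFset : F = Fset P D := by
    rw [Fset_eq_FAB, hPuD, ← hBD, hFAB]
  -- ν(F) = |P| + ν_H(D)
  have hnuF : nuOn (whisker H) F = P.card + nuOn H D := by
    rw [hFAB, nuOn_FAB]
  have hnuFq : nuOn (whisker H) F < q := mFFace_iff_nuOn_lt.1 hface
  -- avoidance property
  have havoid : ∀ d ∈ D, q ≤ 1 + P.card + nuOn H (D.erase d) := by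
    intro d hdD
    have hdA : d ∈ A := (Finset.mem_sdiff.1 hdD).1
    have hdB : d ∉ B := (Finset.mem_sdiff.1 hdD).2
    have hnotface : ¬ MFFace (whisker H) q (insert (Sum.inr d) F) := by
      intro hface'
      have := hmax _ hface' (Finset.subset_insert _ _)
      have : Sum.inr d ∈ F := this ▸ Finset.mem_insert_self _ _
      exact hdB ((hmemB d).1 this)
    rw [MFFace] at hnotface
    push_neg at hnotface
    obtain ⟨M, hM, hMc⟩ := hnotface
    -- M must use the pendant edge at d
    have hpend : s(Sum.inl d, Sum.inr d) ∈ M := by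
      by_contra hpe
      apply hface
      refine ⟨M, ⟨hM.1, ?_, hM.2.2⟩, hMc⟩
      intro e he v hv
      have hvF' := hM.2.1 e he v hv
      rcases Finset.mem_insert.1 hvF' with rfl | hvF
      · exfalso
        rcases whisker_edge_form (hM.1 e he) with ⟨a, b, hab, rfl⟩ | ⟨a, rfl⟩
        · rcases Sym2.mem_iff.1 hv with h1 | h1
          · exact Sum.inr_ne_inl h1
          · exact Sum.inr_ne_inl h1
        · have ha : a = d := by
            rcases Sym2.mem_iff.1 hv with h1 | h1
            · exact absurd h1 Sum.inr_ne_inl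
            · exact Sum.inr_injective h1.symm
          subst ha
          exact hpe he
      · exact hvF
    set M' := M.erase s(Sum.inl d, Sum.inr d) with hM'
    have hM'match : IsMatchingOn (whisker H) (FAB (A.erase d) B) M' := by
      refine ⟨fun e he => hM.1 e (Finset.mem_erase.1 he).2, ?_, ?_⟩
      · intro e he v hv
        obtain ⟨hne, heM⟩ := Finset.mem_erase.1 he
        have hdisj := hM.2.2 _ heM _ hpend hne
        have hvF' := hM.2.1 e heM v hv
        have hvne1 : v ≠ Sum.inl d := fun hh => hdisj v hv (by rw [hh]; simp)
        have hvne2 : v ≠ Sum.inr d := fun hh => hdisj v hv (by rw [hh]; simp)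
        rcases Finset.mem_insert.1 hvF' with rfl | hvF
        · exact absurd rfl hvne2
        · match v with
          | Sum.inl a =>
              apply mem_FAB_inl.2
              refine Finset.mem_erase.2 ⟨fun hh => hvne1 (by rw [hh]), (hmemA a).1 hvF⟩
          | Sum.inr b => exact mem_FAB_inr.2 ((hmemB b).1 hvF)
      · exact fun e he e' he' hne =>
          hM.2.2 e (Finset.mem_erase.1 he).2 e' (Finset.mem_erase.1 he').2 hne
    have hM'c : M'.card = q - 1 := by
      rw [hM', Finset.card_erase_of_mem hpend, hMc]
    have hle := card_le_nuOn hM'match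
    rw [hM'c] at hle
    have hEq : nuOn (whisker H) (FAB (A.erase d) B) =
        (A.erase d ∩ B).card + nuOn H (A.erase d \ B) := nuOn_FAB _ _
    have h1 : A.erase d ∩ B = P := by
      rw [hP]
      ext x
      simp only [Finset.mem_inter, Finset.mem_erase]
      constructor
      · rintro ⟨⟨-, h2⟩, h3⟩; exact ⟨h2, h3⟩
      · rintro ⟨h2, h3⟩
        exact ⟨⟨fun hh => hdB (hh ▸ h3), h2⟩, h3⟩
    have h2 : A.erase d \ B = D.erase d := by
      rw [hD2]
      ext x
      simp only [Finset.mem_sdiff, Finset.mem_erase]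
      tauto
    rw [hEq, h1, h2] at hle
    omega
  -- D is independent
  have hDind : ∀ a ∈ D, ∀ b ∈ D, ¬H.Adj a b := by
    by_contra hcon
    push_neg at hcon
    obtain ⟨a, haD, b, hbD, hab⟩ := hcon
    -- find a leaf `v` of `H[D]` with unique neighbour `w`
    set S := D.filter (fun x => ∃ y ∈ D, H.Adj x y) with hS
    have hSne : S.Nonempty := ⟨a, Finset.mem_filter.2 ⟨haD, b, hbD, hab⟩⟩
    obtain ⟨v, hvS, hvdeg⟩ := exists_low_degree hH S hSne
    obtain ⟨hvD, y, hyD, hvy⟩ := Finset.mem_filter.1 hvS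
    have hDS : ∀ u ∈ D, H.Adj v u → u ∈ S.filter (H.Adj v) := by
      intro u huD hadj
      exact Finset.mem_filter.2 ⟨Finset.mem_filter.2 ⟨huD, v, hvD, hadj.symm⟩, hadj⟩
    have hunique : ∀ u ∈ D, H.Adj v u → u = y := by
      intro u huD hadj
      have h1 := hDS u huD hadj
      have h2 := hDS y hyD hvy
      have := Finset.card_le_one.1 hvdeg
      exact this u h1 y h2
    -- w := y is essential in H[D]
    have hess : nuOn H (D.erase y) + 1 ≤ nuOn H D := by
      obtain ⟨N, hN, hNc⟩ := exists_nuOn_matching H (D.erase y)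
      have hvnotN : ∀ f ∈ N, v ∉ f := by
        intro f hf hvf
        obtain ⟨x1, x2, rfl⟩ := sym2_exists_rep f
        have hadj12 : H.Adj x1 x2 := (H.mem_edgeSet).1 (hN.1 _ hf)
        rcases Sym2.mem_iff.1 hvf with rfl | rfl
        · have hx2 : x2 ∈ D.erase y := hN.2.1 _ hf _ (by simp)
          have := hunique x2 (Finset.mem_erase.1 hx2).2 hadj12
          exact (Finset.mem_erase.1 hx2).1 this
        · have hx1 : x1 ∈ D.erase y := hN.2.1 _ hf _ (by simp)
          have := hunique x1 (Finset.mem_erase.1 hx1).2 hadj12.symm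
          exact (Finset.mem_erase.1 hx1).1 this
      have hnew : s(v, y) ∉ N := fun hh => hvnotN _ hh (by simp)
      have hNmatch : IsMatchingOn H D (insert s(v, y) N) := by
        refine ⟨?_, ?_, ?_⟩
        · intro e he
          rcases Finset.mem_insert.1 he with rfl | he
          · exact (H.mem_edgeSet).2 hvy
          · exact hN.1 e he
        · intro e he x hx
          rcases Finset.mem_insert.1 he with rfl | he
          · rcases Sym2.mem_iff.1 hx with rfl | rfl
            · exact hvD
            · exact hyD
          · exact (Finset.mem_erase.1 (hN.2.1 e he x hx)).2
        · intro e he e' he' hne x hx hx'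
          rcases Finset.mem_insert.1 he with rfl | heN
          · rcases Finset.mem_insert.1 he' with h' | h'N
            · exact hne h'.symm
            · rcases Sym2.mem_iff.1 hx with rfl | rfl
              · exact hvnotN _ h'N hx'
              · exact (Finset.mem_erase.1 (hN.2.1 e' h'N x hx')).1 rfl
          · rcases Finset.mem_insert.1 he' with h' | h'N
            · subst h'
              rcases Sym2.mem_iff.1 hx' with rfl | rfl
              · exact hvnotN _ heN hx
              · exact (Finset.mem_erase.1 (hN.2.1 e heN x hx)).1 rfl
            · exact hN.2.2 e heN e' h'N hne x hx hx'
      have := card_le_nuOn hNmatch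
      rw [Finset.card_insert_of_notMem hnew, hNc] at this
      omega
    have h1 := havoid y hyD
    have h2 : nuOn H (D.erase y) + 1 ≤ nuOn H D := hess
    omega
  -- ν_H(D) = 0
  have hnuD : nuOn H D = 0 := by
    obtain ⟨N, hN, hNc⟩ := exists_nuOn_matching H D
    rcases Finset.eq_empty_or_nonempty N with rfl | ⟨f, hf⟩
    · simp [← hNc]
    · exfalso
      obtain ⟨x1, x2, rfl⟩ := sym2_exists_rep f
      exact hDind x1 (hN.2.1 _ hf _ (by simp)) x2 (hN.2.1 _ hf _ (by simp))
        ((H.mem_edgeSet).1 (hN.1 _ hf))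
  -- |P| + 1 = q
  have hPcard : P.card + 1 = q := by
    rcases Finset.eq_empty_or_nonempty D with hDe | ⟨d, hdD⟩
    · -- D = ∅
      by_cases hAu : A = Finset.univ
      · exfalso
        have hPu : P = Finset.univ := by
          rw [hP, hAu, hBD, hDe]
          simp
        rw [hnuD, hPu] at hnuF
        simp only [Finset.card_univ, Nat.add_zero] at hnuF
        omega
      · obtain ⟨j, hjA⟩ : ∃ j, j ∉ A := by
          by_contra hh
          push_neg at hh
          exact hAu (Finset.eq_univ_iff_forall.2 hh)
        have hjF : Sum.inl j ∉ F := fun hh => hjA ((hmemA j).1 hh)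
        have hnotface : ¬ MFFace (whisker H) q (insert (Sum.inl j) F) := by
          intro hface'
          have := hmax _ hface' (Finset.subset_insert _ _)
          exact hjF (this ▸ Finset.mem_insert_self _ _)
        rw [MFFace] at hnotface
        push_neg at hnotface
        obtain ⟨M, hM, hMc⟩ := hnotface
        obtain ⟨e0, he0, hje0⟩ : ∃ e0 ∈ M, Sum.inl j ∈ e0 := by
          by_contra hh
          push_neg at hh
          apply hface
          refine ⟨M, ⟨hM.1, ?_, hM.2.2⟩, hMc⟩
          intro e he v hv
          have hvF' := hM.2.1 e he v hv
          rcases Finset.mem_insert.1 hvF' with rfl | hvF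
          · exact absurd hv (hh e he)
          · exact hvF
        have hM'match : IsMatchingOn (whisker H) F (M.erase e0) := by
          refine ⟨fun e he => hM.1 e (Finset.mem_erase.1 he).2, ?_, ?_⟩
          · intro e he v hv
            obtain ⟨hne, heM⟩ := Finset.mem_erase.1 he
            have hdisj := hM.2.2 _ heM _ he0 hne
            have hvF' := hM.2.1 e heM v hv
            rcases Finset.mem_insert.1 hvF' with rfl | hvF
            · exact absurd hje0 (hdisj _ hv)
            · exact hvF
          · exact fun e he e' he' hne =>
              hM.2.2 e (Finset.mem_erase.1 he).2 e' (Finset.mem_erase.1 he').2 hne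
        have := card_le_nuOn hM'match
        rw [Finset.card_erase_of_mem he0, hMc, hnuF, hnuD] at this
        omega
    · have h1 := havoid d hdD
      have h2 : nuOn H (D.erase d) ≤ nuOn H D := nuOn_mono (Finset.erase_subset _ _)
      omega
  exact ⟨P, D, hPcard, hPD, hDind, hFset⟩

end Aux5

section Aux6

open Finset

variable {V : Type*} [Fintype V] [DecidableEq V] {H : SimpleGraph V}

/-- Any matching in a graph on `V ⊕ V` has at most `card V` edges. -/
lemma matching_card_le_card {G : SimpleGraph (V ⊕ V)} {F : Finset (V ⊕ V)}
    {M : Finset (Sym2 (V ⊕ V))} (hM : IsMatchingOn G F M) : M.card ≤ Fintype.card V := by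
  classical
  have hdisj : ∀ x ∈ M, ∀ y ∈ M, x ≠ y →
      Disjoint (Finset.univ.filter (· ∈ x)) (Finset.univ.filter (· ∈ y)) := by
    intro x hx y hy hxy
    rw [Finset.disjoint_left]
    intro v hv hv'
    exact hM.2.2 x hx y hy hxy v (Finset.mem_filter.1 hv).2 (Finset.mem_filter.1 hv').2
  have hcard2 : ∀ e ∈ M, (Finset.univ.filter (· ∈ e)).card = 2 := by
    intro e he
    obtain ⟨a, b, rfl⟩ := sym2_exists_rep e
    have hab : a ≠ b := (G.mem_edgeSet.1 (hM.1 _ he)).ne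
    have : Finset.univ.filter (· ∈ s(a, b)) = {a, b} := by
      ext v
      simp [Sym2.mem_iff]
    rw [this, Finset.card_insert_of_notMem (by simp [hab]), Finset.card_singleton]
  have hle : (M.biUnion (fun e => Finset.univ.filter (· ∈ e))).card ≤
      Fintype.card (V ⊕ V) := Finset.card_le_univ _
  rw [Finset.card_biUnion hdisj, Finset.sum_congr rfl hcard2, Finset.sum_const,
    Fintype.card_sum] at hle
  simp only [smul_eq_mul] at hle
  omega

/-- The global key of a facet pair. -/
def pairKey (wt : V → ℕ) (P D : Finset V) : ℕ :=
  (D.card * 2 ^ (Fintype.card V + 1) + (2 ^ (Fintype.card V + 1) - 1 - skey wt D)) *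
    2 ^ (Fintype.card V + 1) + (2 ^ (Fintype.card V + 1) - 1 - skey wt P)

lemma key_step {B X Y r s : ℕ} (hr : r < B) (hXY : X < Y) : X * B + r < Y * B + s := by
  have h2 : (X + 1) * B ≤ Y * B := Nat.mul_le_mul_right _ (by omega)
  have h3 : (X + 1) * B = X * B + B := by ring
  omega

variable {wt : V → ℕ}

lemma skey_bound (hwt : ∀ v, wt v < Fintype.card V + 1) (hinj : Function.Injective wt)
    (S : Finset V) : skey wt S < 2 ^ (Fintype.card V + 1) :=
  skey_lt_pow hinj (fun v _ => hwt v)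

lemma pairKey_lt_of_card_lt (hwt : ∀ v, wt v < Fintype.card V + 1)
    (hinj : Function.Injective wt) {P D P2 D2 : Finset V}
    (h : D2.card < D.card) : pairKey wt P2 D2 < pairKey wt P D := by
  have b1 := skey_bound hwt hinj D2
  have b4 := skey_bound hwt hinj P2
  have hpos : 0 < 2 ^ (Fintype.card V + 1) := Nat.pow_pos (by omega)
  apply key_step (by omega)
  apply key_step (by omega) h

lemma pairKey_lt_of_skeyD (hwt : ∀ v, wt v < Fintype.card V + 1)
    (hinj : Function.Injective wt) {P D P2 D2 : Finset V}
    (hc : D2.card = D.card) (h : skey wt D < skey wt D2) :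
    pairKey wt P2 D2 < pairKey wt P D := by
  have b1 := skey_bound hwt hinj D2
  have b2 := skey_bound hwt hinj D
  have b4 := skey_bound hwt hinj P2
  rw [pairKey, pairKey, hc]
  apply key_step (by omega)
  omega

lemma pairKey_lt_of_skeyP (hwt : ∀ v, wt v < Fintype.card V + 1)
    (hinj : Function.Injective wt) {P D P2 : Finset V}
    (h : skey wt P < skey wt P2) :
    pairKey wt P2 D < pairKey wt P D := by
  have b2 := skey_bound hwt hinj P
  have b4 := skey_bound hwt hinj P2
  rw [pairKey, pairKey]
  omega

/-- The maximal-weight element of the symmetric difference. -/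
lemma exists_maxdiff (hinj : Function.Injective wt) {S T : Finset V} (hne : S ≠ T) :
    ∃ mx, ((mx ∈ S ∧ mx ∉ T) ∨ (mx ∈ T ∧ mx ∉ S)) ∧
      ∀ x, ((x ∈ S ∧ x ∉ T) ∨ (x ∈ T ∧ x ∉ S)) → x ≠ mx → wt x < wt mx := by
  classical
  set U := (S \ T) ∪ (T \ S) with hU
  have hUne : U.Nonempty := by
    by_contra hh
    rw [Finset.not_nonempty_iff_eq_empty] at hh
    apply hne
    ext x
    have h1 : x ∉ (S \ T) ∪ (T \ S) := by rw [← hU, hh]; simp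
    simp only [Finset.mem_union, Finset.mem_sdiff] at h1
    push_neg at h1
    constructor
    · intro hx; exact h1.1 hx
    · intro hx; exact h1.2 hx
  obtain ⟨mx, hmx, hmax⟩ := Finset.exists_max_image U wt hUne
  have hmem : (mx ∈ S ∧ mx ∉ T) ∨ (mx ∈ T ∧ mx ∉ S) := by
    rcases Finset.mem_union.1 hmx with h | h
    · exact Or.inl (Finset.mem_sdiff.1 h)
    · exact Or.inr (Finset.mem_sdiff.1 h)
  refine ⟨mx, hmem, fun x hx hxmx => ?_⟩
  have hxU : x ∈ U := by
    rcases hx with ⟨h1, h2⟩ | ⟨h1, h2⟩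
    · exact Finset.mem_union_left _ (Finset.mem_sdiff.2 ⟨h1, h2⟩)
    · exact Finset.mem_union_right _ (Finset.mem_sdiff.2 ⟨h1, h2⟩)
  have := hmax x hxU
  rcases lt_or_eq_of_le this with h | h
  · exact h
  · exact absurd (hinj h) hxmx

lemma skey_injective (hinj : Function.Injective wt) {S T : Finset V}
    (h : skey wt S = skey wt T) : S = T := by
  by_contra hne
  obtain ⟨mx, hmem, hmax⟩ := exists_maxdiff hinj hne
  rcases hmem with ⟨h1, h2⟩ | ⟨h1, h2⟩
  · have hlt : skey wt T < skey wt S :=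
      skey_lt_skey hinj h1 h2 (fun x hx hxmx => hmax x (Or.symm hx) hxmx)
    omega
  · have hlt : skey wt S < skey wt T :=
      skey_lt_skey hinj h1 h2 (fun x hx hxmx => hmax x hx hxmx)
    omega

/-- Inversion: recover the lexicographic information from a key comparison. -/
lemma pairKey_lt_inv (hwt : ∀ v, wt v < Fintype.card V + 1)
    (hinj : Function.Injective wt) {P D P' D' : Finset V}
    (h : pairKey wt P' D' < pairKey wt P D) :
    D'.card < D.card ∨ (D'.card = D.card ∧ skey wt D < skey wt D') ∨
      (D' = D ∧ skey wt P < skey wt P') := by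
  rcases Nat.lt_trichotomy D'.card D.card with hc | hc | hc
  · exact Or.inl hc
  · rcases Nat.lt_trichotomy (skey wt D) (skey wt D') with hs | hs | hs
    · exact Or.inr (Or.inl ⟨hc, hs⟩)
    · have hDD : D' = D := skey_injective hinj hs.symm
      rcases Nat.lt_trichotomy (skey wt P) (skey wt P') with hp | hp | hp
      · exact Or.inr (Or.inr ⟨hDD, hp⟩)
      · have hPP : P' = P := skey_injective hinj hp.symm
        rw [hDD, hPP] at h
        omega
      · have h2 := pairKey_lt_of_skeyP (P := P') (P2 := P) (D := D') hwt hinj hp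
        rw [hDD] at h2 h
        omega
    · exact absurd (pairKey_lt_of_skeyD (P := P') (P2 := P) (D := D') (D2 := D)
        hwt hinj hc.symm hs) (by omega)
  · exact absurd (pairKey_lt_of_card_lt (P := P') (P2 := P) (D := D') (D2 := D)
      hwt hinj hc) (by omega)

end Aux6

section Aux7

open Finset

variable {V : Type*} [Fintype V] [DecidableEq V] {H : SimpleGraph V} {wt : V → ℕ}

/-- The key exchange lemma for the shelling order. -/
lemma exchange [DecidableRel H.Adj] (hwt : ∀ v, wt v < Fintype.card V + 1)
    (hinj : Function.Injective wt)
    (helim : ∀ v, (Finset.univ.filter (fun u => H.Adj v u ∧ wt u < wt v)).card ≤ 1)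
    {q : ℕ} {P D P' D' : Finset V}
    (hP : P.card + 1 = q) (hPD : Disjoint P D) (hDind : ∀ a ∈ D, ∀ b ∈ D, ¬H.Adj a b)
    (hP' : P'.card + 1 = q) (hPD' : Disjoint P' D')
    (hD'ind : ∀ a ∈ D', ∀ b ∈ D', ¬H.Adj a b)
    (hlt : pairKey wt P' D' < pairKey wt P D) :
    ∃ (v : V ⊕ V) (P2 D2 : Finset V), v ∈ Fset P D ∧ v ∉ Fset P' D' ∧
      P2.card + 1 = q ∧ Disjoint P2 D2 ∧ (∀ a ∈ D2, ∀ b ∈ D2, ¬H.Adj a b) ∧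
      pairKey wt P2 D2 < pairKey wt P D ∧ (Fset P D).erase v ⊆ Fset P2 D2 := by
  classical
  by_cases hcase1 : ∃ d ∈ D, d ∉ P' ∪ D'
  · -- Case 1: drop `d` from `D`
    obtain ⟨d, hdD, hdnot⟩ := hcase1
    refine ⟨Sum.inl d, P, D.erase d, mem_Fset_inl.2 (mem_union_right _ hdD),
      by rw [mem_Fset_inl]; exact hdnot, hP,
      Finset.disjoint_of_subset_right (erase_subset _ _) hPD,
      fun a ha b hb => hDind a (mem_of_mem_erase ha) b (mem_of_mem_erase hb),
      pairKey_lt_of_card_lt hwt hinj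
        (by rw [card_erase_of_mem hdD]; have := Finset.card_pos.2 ⟨d, hdD⟩; omega), ?_⟩
    intro z hz
    obtain ⟨hzne, hzF⟩ := Finset.mem_erase.1 hz
    match z with
    | Sum.inl a =>
        apply mem_Fset_inl.2
        rcases mem_union.1 (mem_Fset_inl.1 hzF) with h | h
        · exact mem_union_left _ h
        · exact mem_union_right _ (Finset.mem_erase.2 ⟨fun hh => hzne (by rw [hh]), h⟩)
    | Sum.inr b =>
        exact mem_Fset_inr.2 (fun hb => (mem_Fset_inr.1 hzF) (mem_of_mem_erase hb))
  by_cases hcase2 : (∃ c ∈ P, c ∉ P' ∪ D') ∧ D.Nonempty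
  · -- Case 2: move `d ∈ D` into `P`, dropping `c ∈ P`
    obtain ⟨⟨c, hcP, hcnot⟩, ⟨d, hdD⟩⟩ := hcase2
    have hdP : d ∉ P.erase c := fun hh => Finset.disjoint_left.1 hPD (mem_of_mem_erase hh) hdD
    refine ⟨Sum.inl c, insert d (P.erase c), D.erase d,
      mem_Fset_inl.2 (mem_union_left _ hcP),
      by rw [mem_Fset_inl]; exact hcnot, ?_, ?_, ?_, ?_, ?_⟩
    · rw [Finset.card_insert_of_notMem hdP, Finset.card_erase_of_mem hcP]
      have := Finset.card_pos.2 ⟨c, hcP⟩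
      omega
    · rw [Finset.disjoint_left]
      intro x hx hx2
      rcases Finset.mem_insert.1 hx with rfl | hx
      · exact (Finset.notMem_erase x D) hx2
      · exact Finset.disjoint_left.1 hPD (mem_of_mem_erase hx) (mem_of_mem_erase hx2)
    · exact fun a ha b hb => hDind a (mem_of_mem_erase ha) b (mem_of_mem_erase hb)
    · exact pairKey_lt_of_card_lt hwt hinj
        (by rw [card_erase_of_mem hdD]; have := Finset.card_pos.2 ⟨d, hdD⟩; omega)
    · intro z hz
      obtain ⟨hzne, hzF⟩ := Finset.mem_erase.1 hz
      match z with
      | Sum.inl a =>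
          apply mem_Fset_inl.2
          by_cases had : a = d
          · subst had
            exact mem_union_left _ (Finset.mem_insert_self _ _)
          · rcases mem_union.1 (mem_Fset_inl.1 hzF) with h | h
            · exact mem_union_left _ (Finset.mem_insert_of_mem
                (Finset.mem_erase.2 ⟨fun hh => hzne (by rw [hh]), h⟩))
            · exact mem_union_right _ (Finset.mem_erase.2 ⟨had, h⟩)
      | Sum.inr b =>
          exact mem_Fset_inr.2 (fun hb => (mem_Fset_inr.1 hzF) (mem_of_mem_erase hb))
  -- Cases 3/4: no vertex of `P ∪ D` outside `P' ∪ D'` that can be dropped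
  push_neg at hcase1 hcase2
  have hDsub : ∀ d ∈ D, d ∈ P' ∪ D' := hcase1
  rcases pairKey_lt_inv hwt hinj hlt with hc | ⟨hc, hs⟩ | ⟨hDD, hp⟩
  · -- |D'| < |D| : impossible here
    exfalso
    have hDne : D.Nonempty := Finset.card_pos.1 (by omega)
    obtain ⟨c, hcP, hcnot⟩ : ∃ c ∈ P, c ∉ P' ∪ D' := by
      by_contra hh
      push_neg at hh
      have hsub : P ∪ D ⊆ P' ∪ D' := Finset.union_subset hh hDsub
      have hcard := Finset.card_le_card hsub
      rw [Finset.card_union_of_disjoint hPD, Finset.card_union_of_disjoint hPD'] at hcard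
      omega
    exact (Finset.nonempty_iff_ne_empty.1 hDne) (hcase2 ⟨c, hcP, hcnot⟩)
  · -- |D'| = |D| and skey D < skey D'
    have hDne' : D ≠ D' := fun hh => by rw [hh] at hs; exact lt_irrefl _ hs
    by_cases hPs : ∃ c ∈ P, c ∉ P' ∪ D'
    · exfalso
      obtain ⟨c, hcP, hcnot⟩ := hPs
      have hDne : D.Nonempty := by
        rcases Finset.eq_empty_or_nonempty D with rfl | h
        · have hD'0 : D' = ∅ := Finset.card_eq_zero.1 (by simpa using hc)
          exact absurd hD'0.symm hDne'
        · exact h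
      exact (Finset.nonempty_iff_ne_empty.1 hDne) (hcase2 ⟨c, hcP, hcnot⟩)
    · -- Case 3 : the x-sets agree
      push_neg at hPs
      have hxeq : P ∪ D = P' ∪ D' := by
        apply Finset.eq_of_subset_of_card_le (Finset.union_subset hPs hDsub)
        rw [Finset.card_union_of_disjoint hPD, Finset.card_union_of_disjoint hPD']
        omega
      obtain ⟨m, hmem, hmax⟩ := exists_maxdiff hinj hDne'
      have hmD' : m ∈ D' ∧ m ∉ D := by
        rcases hmem with ⟨h1, h2⟩ | ⟨h1, h2⟩
        · exfalso
          have : skey wt D' < skey wt D :=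
            skey_lt_skey hinj h1 h2 (fun x hx hxmx => hmax x (Or.symm hx) hxmx)
          omega
        · exact ⟨h1, h2⟩
      obtain ⟨hmD', hmD⟩ := hmD'
      have hmP : m ∈ P := by
        have : m ∈ P ∪ D := hxeq ▸ (mem_union_right _ hmD')
        rcases mem_union.1 this with h | h
        · exact h
        · exact absurd h hmD
      have huniq : ∀ u ∈ D, H.Adj m u → wt u < wt m := by
        intro u hu hadj
        have huD' : u ∉ D' := fun huD' => hD'ind m hmD' u huD' hadj
        exact hmax u (Or.inl ⟨hu, huD'⟩) (fun hh => hmD (hh ▸ hu))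
      have hcardnb : (D.filter (fun u => H.Adj m u)).card ≤ 1 := by
        refine le_trans (Finset.card_le_card ?_) (helim m)
        intro u hu
        obtain ⟨huD, hadj⟩ := Finset.mem_filter.1 hu
        exact Finset.mem_filter.2 ⟨Finset.mem_univ u, hadj, huniq u huD hadj⟩
      -- choose `e`
      obtain ⟨e, heD, hewt, heuniq⟩ : ∃ e ∈ D, wt e < wt m ∧ ∀ u ∈ D, H.Adj m u → u = e := by
        by_cases hex : ∃ u ∈ D, H.Adj m u
        · obtain ⟨u, huD, hadj⟩ := hex
          refine ⟨u, huD, huniq u huD hadj, ?_⟩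
          intro u' hu' hadj'
          exact Finset.card_le_one.1 hcardnb u' (Finset.mem_filter.2 ⟨hu', hadj'⟩)
            u (Finset.mem_filter.2 ⟨huD, hadj⟩)
        · push_neg at hex
          obtain ⟨e, he⟩ : (D \ D').Nonempty := by
            rcases Finset.eq_empty_or_nonempty (D \ D') with hh | hh
            · exfalso
              have : D ⊆ D' := by
                intro x hx
                by_contra hxD'
                have : x ∈ D \ D' := Finset.mem_sdiff.2 ⟨hx, hxD'⟩
                rw [hh] at this
                exact absurd this (Finset.notMem_empty x)
              exact hDne' (Finset.eq_of_subset_of_card_le this (by omega))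
            · exact hh
          obtain ⟨heD, heD'⟩ := Finset.mem_sdiff.1 he
          exact ⟨e, heD, hmax e (Or.inl ⟨heD, heD'⟩) (fun hh => hmD (hh ▸ heD)),
            fun u hu hadj => absurd hadj (hex u hu)⟩
      have hem : e ≠ m := fun hh => hmD (hh ▸ heD)
      have heP : e ∉ P := fun hh => Finset.disjoint_left.1 hPD hh heD
      have hmD2 : m ∉ D.erase e := fun hh => hmD (mem_of_mem_erase hh)
      refine ⟨Sum.inr m, insert e (P.erase m), insert m (D.erase e),
        mem_Fset_inr.2 hmD, by simp [mem_Fset_inr, hmD'], ?_, ?_, ?_, ?_, ?_⟩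
      · rw [Finset.card_insert_of_notMem
          (fun hh => heP (mem_of_mem_erase hh)), Finset.card_erase_of_mem hmP]
        have := Finset.card_pos.2 ⟨m, hmP⟩
        omega
      · rw [Finset.disjoint_left]
        intro x hx hx2
        rcases Finset.mem_insert.1 hx with rfl | hx
        · rcases Finset.mem_insert.1 hx2 with h | h
          · exact hem h
          · exact (Finset.notMem_erase x D) h
        · rcases Finset.mem_insert.1 hx2 with h | h
          · exact (Finset.mem_erase.1 hx).1 h
          · exact Finset.disjoint_left.1 hPD (mem_of_mem_erase hx) (mem_of_mem_erase h)
      · intro a ha b hb hadj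
        rcases Finset.mem_insert.1 ha with ham | ha'
        · rcases Finset.mem_insert.1 hb with hbm | hb'
          · exact H.loopless.irrefl m (by rwa [ham, hbm] at hadj)
          · exact (Finset.mem_erase.1 hb').1
              (heuniq b (mem_of_mem_erase hb') (by rwa [ham] at hadj))
        · rcases Finset.mem_insert.1 hb with hbm | hb'
          · refine (Finset.mem_erase.1 ha').1
              (heuniq a (mem_of_mem_erase ha') ?_)
            rw [hbm] at hadj
            exact hadj.symm
          · exact hDind a (mem_of_mem_erase ha') b (mem_of_mem_erase hb') hadj
      · apply pairKey_lt_of_skeyD hwt hinj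
        · rw [Finset.card_insert_of_notMem hmD2, Finset.card_erase_of_mem heD]
          have := Finset.card_pos.2 ⟨e, heD⟩
          omega
        · apply skey_lt_skey hinj (Finset.mem_insert_self m _) hmD
          intro x hx hxm
          rcases hx with ⟨h1, h2⟩ | ⟨h1, h2⟩
          · have hxe : x = e := by
              by_contra hxe
              exact h2 (Finset.mem_insert_of_mem (Finset.mem_erase.2 ⟨hxe, h1⟩))
            subst hxe
            exact hewt
          · rcases Finset.mem_insert.1 h1 with rfl | h1
            · exact absurd rfl hxm
            · exact absurd (mem_of_mem_erase h1) h2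
      · intro z hz
        obtain ⟨hzne, hzF⟩ := Finset.mem_erase.1 hz
        match z with
        | Sum.inl a =>
            apply mem_Fset_inl.2
            by_cases ham : a = m
            · subst ham
              exact mem_union_right _ (Finset.mem_insert_self _ _)
            · by_cases hae : a = e
              · subst hae
                exact mem_union_left _ (Finset.mem_insert_self _ _)
              · rcases mem_union.1 (mem_Fset_inl.1 hzF) with h | h
                · exact mem_union_left _ (Finset.mem_insert_of_mem
                    (Finset.mem_erase.2 ⟨ham, h⟩))
                · exact mem_union_right _ (Finset.mem_insert_of_mem
                    (Finset.mem_erase.2 ⟨hae, h⟩))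
        | Sum.inr b =>
            apply mem_Fset_inr.2
            intro hb
            rcases Finset.mem_insert.1 hb with rfl | hb
            · exact hzne rfl
            · exact (mem_Fset_inr.1 hzF) (mem_of_mem_erase hb)
  · -- D' = D and skey P < skey P'
    have hPne : P ≠ P' := fun hh => by rw [hh] at hp; exact lt_irrefl _ hp
    obtain ⟨c, hcP, hcP'⟩ : ∃ c ∈ P, c ∉ P' := by
      by_contra hh
      push_neg at hh
      exact hPne (Finset.eq_of_subset_of_card_le hh (by omega))
    rcases Finset.eq_empty_or_nonempty D with hDe | hDne
    · -- Case 4 : D = D' = ∅, swap inside P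
      subst hDe
      have hD'e : D' = ∅ := hDD
      obtain ⟨m, hmem, hmax⟩ := exists_maxdiff hinj hPne
      have hmP' : m ∈ P' ∧ m ∉ P := by
        rcases hmem with ⟨h1, h2⟩ | ⟨h1, h2⟩
        · exfalso
          have : skey wt P' < skey wt P :=
            skey_lt_skey hinj h1 h2 (fun x hx hxmx => hmax x (Or.symm hx) hxmx)
          omega
        · exact ⟨h1, h2⟩
      obtain ⟨hmP', hmP⟩ := hmP'
      refine ⟨Sum.inl c, insert m (P.erase c), ∅,
        mem_Fset_inl.2 (mem_union_left _ hcP), ?_, ?_, ?_, ?_, ?_, ?_⟩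
      · rw [mem_Fset_inl, hD'e]
        simp [hcP']
      · rw [Finset.card_insert_of_notMem
          (fun hh => hmP (mem_of_mem_erase hh)), Finset.card_erase_of_mem hcP]
        have := Finset.card_pos.2 ⟨c, hcP⟩
        omega
      · exact Finset.disjoint_empty_right _
      · intro a ha
        exact absurd ha (Finset.notMem_empty a)
      · apply pairKey_lt_of_skeyP hwt hinj
        apply skey_lt_skey hinj (Finset.mem_insert_self m _) hmP
        intro x hx hxm
        rcases hx with ⟨h1, h2⟩ | ⟨h1, h2⟩
        · have hxc : x = c := by
            by_contra hxc
            exact h2 (Finset.mem_insert_of_mem (Finset.mem_erase.2 ⟨hxc, h1⟩))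
          subst hxc
          exact hmax x (Or.inl ⟨hcP, hcP'⟩) hxm
        · rcases Finset.mem_insert.1 h1 with rfl | h1
          · exact absurd rfl hxm
          · exact absurd (mem_of_mem_erase h1) h2
      · intro z hz
        obtain ⟨hzne, hzF⟩ := Finset.mem_erase.1 hz
        match z with
        | Sum.inl a =>
            apply mem_Fset_inl.2
            by_cases ham : a = m
            · subst ham
              exact mem_union_left _ (Finset.mem_insert_self _ _)
            · rcases mem_union.1 (mem_Fset_inl.1 hzF) with h | h
              · exact mem_union_left _ (Finset.mem_insert_of_mem
                  (Finset.mem_erase.2 ⟨fun hh => hzne (by rw [hh]), h⟩))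
              · exact absurd h (Finset.notMem_empty a)
        | Sum.inr b =>
            exact mem_Fset_inr.2 (Finset.notMem_empty b)
    · -- D nonempty : handled by case 2, contradiction
      exfalso
      have hcD' : c ∉ P' ∪ D' := by
        rw [hDD]
        intro hh
        rcases mem_union.1 hh with h | h
        · exact hcP' h
        · exact Finset.disjoint_left.1 hPD hcP h
      exact (Finset.nonempty_iff_ne_empty.1 hDne) (hcase2 ⟨c, hcP, hcD'⟩)

end Aux7














section Aux8

open Finset

variable {V : Type*} [Fintype V] [DecidableEq V] {H : SimpleGraph V} {wt : V → ℕ}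

lemma Dof_Fset (P D : Finset V) :
    Finset.univ.filter (fun v => Sum.inr v ∉ Fset P D) = D := by
  ext v
  simp [mem_Fset_inr]

lemma Pof_Fset {P D : Finset V} (hPD : Disjoint P D) :
    Finset.univ.filter (fun v => Sum.inl v ∈ Fset P D ∧ Sum.inr v ∈ Fset P D) = P := by
  ext v
  simp only [Finset.mem_filter, Finset.mem_univ, true_and, mem_Fset_inl, mem_Fset_inr]
  constructor
  · rintro ⟨h1, h2⟩
    rcases Finset.mem_union.1 h1 with h | h
    · exact h
    · exact absurd h h2
  · intro hv
    exact ⟨Finset.mem_union_left _ hv, fun hh => Finset.disjoint_left.1 hPD hv hh⟩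

lemma pairKey_inj (hwt : ∀ v, wt v < Fintype.card V + 1)
    (hinj : Function.Injective wt) {P D P' D' : Finset V}
    (h : pairKey wt P D = pairKey wt P' D') : P = P' ∧ D = D' := by
  rcases Nat.lt_trichotomy D.card D'.card with hc | hc | hc
  · exact absurd (pairKey_lt_of_card_lt (P := P') (P2 := P) (D := D') (D2 := D) hwt hinj hc)
      (by omega)
  · rcases Nat.lt_trichotomy (skey wt D) (skey wt D') with hs | hs | hs
    · exact absurd (pairKey_lt_of_skeyD (P := P) (P2 := P') (D := D) (D2 := D')
        hwt hinj hc.symm hs) (by omega)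
    · have hDD : D = D' := skey_injective hinj hs
      rcases Nat.lt_trichotomy (skey wt P) (skey wt P') with hp | hp | hp
      · have h2 := pairKey_lt_of_skeyP (P := P) (P2 := P') (D := D) hwt hinj hp
        rw [hDD] at h2 h
        omega
      · exact ⟨skey_injective hinj hp, hDD⟩
      · have h2 := pairKey_lt_of_skeyP (P := P') (P2 := P) (D := D') hwt hinj hp
        rw [hDD] at h
        omega
    · exact absurd (pairKey_lt_of_skeyD (P := P') (P2 := P) (D := D') (D2 := D)
        hwt hinj hc hs) (by omega)
  · exact absurd (pairKey_lt_of_card_lt (P := P) (P2 := P') (D := D) (D2 := D') hwt hinj hc)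
      (by omega)

end Aux8

/-- if `H` is a forest on `n` vertices, then for every
`1 ≤ q ≤ ν(W(H))` the complex `MF^q(W(H))` is shellable and pure of dimension
`n + q - 2` (every facet has cardinality `n + q - 1`). -/
theorem mfComplex_whisker_forest_pure_shellable
    {V : Type*} [Fintype V] [DecidableEq V] (H : SimpleGraph V)
    (hH : H.IsAcyclic) (n : ℕ) (hn : Fintype.card V = n) (ν q : ℕ)
    (hν₁ : ∃ M : Finset (Sym2 (V ⊕ V)),
      IsMatchingOn (whisker H) Finset.univ M ∧ M.card = ν)
    (hν₂ : ∀ M : Finset (Sym2 (V ⊕ V)),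
      IsMatchingOn (whisker H) Finset.univ M → M.card ≤ ν)
    (hq1 : 1 ≤ q) (hq2 : q ≤ ν) :
    Shellable (MFFace (whisker H) q) ∧
    ∀ F : Finset (V ⊕ V), IsFacet (MFFace (whisker H) q) F →
      F.card = n + q - 1 := by
  classical
  haveI : DecidableRel H.Adj := Classical.decRel _
  obtain ⟨Mν, hMν, hMνcard⟩ := hν₁
  have hνn : ν ≤ Fintype.card V := hMνcard ▸ matching_card_le_card hMν
  have hq_le : q ≤ Fintype.card V := le_trans hq2 hνn
  have hpos : 0 < Fintype.card V := by omega
  haveI : Nonempty V := Fintype.card_pos_iff.1 hpos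
  obtain ⟨wt, hinj, hwt, helim⟩ := exists_elim_weights hH
  -- the facets, enumerated by their key
  set FS : Finset (Finset (V ⊕ V)) :=
    Finset.univ.filter (fun F => IsFacet (MFFace (whisker H) q) F) with hFS
  set KeyOf : Finset (V ⊕ V) → ℕ := fun F =>
    pairKey wt (Finset.univ.filter (fun v => Sum.inl v ∈ F ∧ Sum.inr v ∈ F))
      (Finset.univ.filter (fun v => Sum.inr v ∉ F)) with hKeyOf
  have hKeyFset : ∀ P D : Finset V, Disjoint P D → KeyOf (Fset P D) = pairKey wt P D := by
    intro P D hPD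
    rw [hKeyOf]
    simp only []
    rw [Pof_Fset hPD, Dof_Fset]
  have hstruct : ∀ F ∈ FS, ∃ P D : Finset V, P.card + 1 = q ∧ Disjoint P D ∧
      (∀ a ∈ D, ∀ b ∈ D, ¬H.Adj a b) ∧ F = Fset P D := by
    intro F hF
    exact facet_structure hH hq1 hq_le ((Finset.mem_filter.1 hF).2)
  have hKinj : Set.InjOn KeyOf FS := by
    intro F1 h1 F2 h2 hkey
    obtain ⟨P1, D1, hq1', hPD1, hind1, rfl⟩ := hstruct F1 h1
    obtain ⟨P2, D2, hq2', hPD2, hind2, rfl⟩ := hstruct F2 h2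
    rw [hKeyFset P1 D1 hPD1, hKeyFset P2 D2 hPD2] at hkey
    obtain ⟨hPP, hDD⟩ := pairKey_inj hwt hinj hkey
    rw [hPP, hDD]
  set t := FS.card with ht
  set ks := FS.image KeyOf with hks
  have hkscard : ks.card = t := Finset.card_image_of_injOn hKinj
  set iso := ks.orderIsoOfFin hkscard with hiso
  have hex : ∀ i : Fin t, ∃ F, F ∈ FS ∧ KeyOf F = ((iso i : {x // x ∈ ks}) : ℕ) := by
    intro i
    obtain ⟨F, hF, hkey⟩ := Finset.mem_image.1 (iso i).2
    exact ⟨F, hF, hkey⟩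
  choose Enum hEnumFS hEnumKey using hex
  have hord : ∀ i j : Fin t, KeyOf (Enum i) < KeyOf (Enum j) ↔ i < j := by
    intro i j
    rw [hEnumKey i, hEnumKey j]
    rw [Subtype.coe_lt_coe]
    exact (ks.orderIsoOfFin hkscard).lt_iff_lt
  have hsurj : ∀ F ∈ FS, ∃ i, Enum i = F := by
    intro F hF
    have hkF : KeyOf F ∈ ks := Finset.mem_image_of_mem _ hF
    obtain ⟨i, hi⟩ := iso.surjective ⟨KeyOf F, hkF⟩
    refine ⟨i, hKinj (hEnumFS i) hF ?_⟩
    rw [hEnumKey i, hi]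
  have hEnumInj : Function.Injective Enum := by
    intro i j hij
    have : KeyOf (Enum i) = KeyOf (Enum j) := by rw [hij]
    rcases lt_trichotomy i j with h | h | h
    · exact absurd ((hord i j).2 h) (by omega)
    · exact h
    · exact absurd ((hord j i).2 h) (by omega)
  have hfacetmem : ∀ P D : Finset V, P.card + 1 = q → Disjoint P D →
      (∀ a ∈ D, ∀ b ∈ D, ¬H.Adj a b) → Fset P D ∈ FS := by
    intro P D h1 h2 h3
    exact Finset.mem_filter.2 ⟨Finset.mem_univ _, isFacet_Fset h1 h2 h3⟩
  constructor
  · refine ⟨t, Enum, fun i => (Finset.mem_filter.1 (hEnumFS i)).2,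
      fun F' hF' => ?_, hEnumInj, ?_⟩
    · obtain ⟨i, hi⟩ := hsurj F' (Finset.mem_filter.2 ⟨Finset.mem_univ _, hF'⟩)
      exact ⟨i, hi.symm⟩
    · intro k hk σ hσk ⟨i, hik, hσi⟩
      obtain ⟨P, D, hPq, hPD, hDind, hFk⟩ := hstruct (Enum k) (hEnumFS k)
      obtain ⟨P', D', hPq', hPD', hDind', hFi⟩ := hstruct (Enum i) (hEnumFS i)
      have hklt : pairKey wt P' D' < pairKey wt P D := by
        have := (hord i k).2 hik
        rw [hFk, hFi, hKeyFset P D hPD, hKeyFset P' D' hPD'] at this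
        exact this
      obtain ⟨v, P2, D2, hvk, hvi, hq2', hPD2, hind2, hkey2, hsub2⟩ :=
        exchange hwt hinj helim hPq hPD hDind hPq' hPD' hDind' hklt
      obtain ⟨j, hj⟩ := hsurj (Fset P2 D2) (hfacetmem P2 D2 hq2' hPD2 hind2)
      have hjk : j < k := by
        rw [← hord j k, hj, hFk, hKeyFset P2 D2 hPD2, hKeyFset P D hPD]
        exact hkey2
      have hvmem : v ∈ Enum k := by rw [hFk]; exact hvk
      refine ⟨(Enum k).erase v, ?_, Finset.erase_subset _ _, ⟨j, hjk, ?_⟩, ?_⟩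
      · intro x hx
        refine Finset.mem_erase.2 ⟨?_, hσk hx⟩
        rintro rfl
        have : x ∈ Enum i := hσi hx
        rw [hFi] at this
        exact hvi this
      · rw [hj, hFk]
        exact hsub2
      · rw [Finset.card_erase_of_mem hvmem]
  · intro F hF
    obtain ⟨P, D, hPq, hPD, hDind, hFeq⟩ :=
      facet_structure hH hq1 hq_le hF
    rw [hFeq, card_Fset, Finset.card_union_of_disjoint hPD]
    have hDle : D.card ≤ Fintype.card V := Finset.card_le_univ D
    omega
end
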